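/- arXiv:2004.06830 — 2 statements merged into one kernel-verified Lean document; each statement's English description precedes it below -/
import Mathlib

section
/- Sample complexity lower bound for ε-DP k-ary distribution estimation under ℓ₂ distance, small-error regime: There exists a universal constant c > 0 such that for every integer k ≥ 40, every α with 0 < α < min(1/√k, 1/48), every ε > 0, and every n: if there exists an ε-differentially private Markov kernel θ̂ from ([k])^n to Δ_k such that for every p ∈ Δ_k, E_{X∼p^{⊗n}} E_{Q∼θ̂(X)}[‖Q − p‖₂] ≤ α, then n ≥ c·(1/α² + √k/(αε)). -/
open MeasureTheory ProbabilityTheory ENNReal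

/-- Hamming distance between two datasets in `𝒳^n`. -/
noncomputable def ham {𝒳 : Type*} {n : ℕ} (x y : Fin n → 𝒳) : ℕ :=
  letI : DecidableEq 𝒳 := Classical.decEq 𝒳
  (Finset.univ.filter fun i => x i ≠ y i).card

/-- `(ε, δ)`-differential privacy for a kernel from `𝒳^n` to `Θ`. -/
def IsDP {𝒳 Θ : Type*} [MeasurableSpace 𝒳] [MeasurableSpace Θ] {n : ℕ}
    (M : Kernel (Fin n → 𝒳) Θ) (ε δ : ℝ) : Prop :=
  ∀ x y : Fin n → 𝒳, ham x y ≤ 1 → ∀ S : Set Θ, MeasurableSet S →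
    M x S ≤ ENNReal.ofReal (Real.exp ε) * M y S + ENNReal.ofReal δ

/-- The simplex `Δ_k` of probability vectors on `[k]`. -/
def simplex (k : ℕ) : Type := {p : Fin k → ℝ // p ∈ stdSimplex ℝ (Fin k)}

noncomputable instance (k : ℕ) : MeasurableSpace (simplex k) :=
  Subtype.instMeasurableSpace

/-- The probability measure on `Fin k` associated to a probability vector. -/
noncomputable def discMeasure {k : ℕ} (p : Fin k → ℝ) : Measure (Fin k) :=
  ∑ i, ENNReal.ofReal (p i) • Measure.dirac i

/-- `n` i.i.d. samples from the distribution with probability vector `p`. -/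
noncomputable def iidSamples {k : ℕ} (n : ℕ) (p : Fin k → ℝ) : Measure (Fin n → Fin k) :=
  Measure.pi fun _ : Fin n => discMeasure p

/-- Total variation distance between `k`-ary probability vectors:
`(1/2) Σ_x |p(x) − q(x)|`. -/
noncomputable def tvVec {k : ℕ} (p q : Fin k → ℝ) : ℝ := (∑ x, |p x - q x|) / 2

/-- `ℓ₂` distance between `k`-ary probability vectors. -/
noncomputable def l2Vec {k : ℕ} (p q : Fin k → ℝ) : ℝ := Real.sqrt (∑ x, (p x - q x) ^ 2)

namespace KLB

open Finset

variable {k n : ℕ}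

/-- Product weight of a dataset. -/
def W {k n : ℕ} (p : Fin k → ℝ) (x : Fin n → Fin k) : ℝ := ∏ i, p (x i)

lemma W_nonneg {p : Fin k → ℝ} (hp : ∀ a, 0 ≤ p a) (x : Fin n → Fin k) : 0 ≤ W p x :=
  Finset.prod_nonneg fun i _ => hp _

lemma sum_pi_prod {C : Type*} [Fintype C] (F : Fin n → C → ℝ) :
    ∑ f : Fin n → C, ∏ i, F i (f i) = ∏ i, ∑ c, F i c := by
  rw [Finset.prod_univ_sum, Fintype.piFinset_univ]

lemma sum_W (p : Fin k → ℝ) : ∑ x : Fin n → Fin k, W p x = (∑ a, p a) ^ n := by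
  unfold W
  rw [sum_pi_prod fun _ a => p a, Finset.prod_const, Finset.card_univ, Fintype.card_fin]

/- l2 metric facts -/

lemma l2Vec_eq_dist (p q : Fin k → ℝ) :
    l2Vec p q = dist ((WithLp.equiv 2 (Fin k → ℝ)).symm p) ((WithLp.equiv 2 (Fin k → ℝ)).symm q) := by
  rw [EuclideanSpace.dist_eq]
  unfold l2Vec
  congr 1
  refine Finset.sum_congr rfl fun a _ => ?_
  rw [Real.dist_eq, sq_abs]
  rfl

lemma l2Vec_nonneg (p q : Fin k → ℝ) : 0 ≤ l2Vec p q := Real.sqrt_nonneg _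

lemma l2Vec_comm (p q : Fin k → ℝ) : l2Vec p q = l2Vec q p := by
  rw [l2Vec_eq_dist, l2Vec_eq_dist, dist_comm]

lemma l2Vec_triangle (q p1 p2 : Fin k → ℝ) : l2Vec p1 p2 ≤ l2Vec q p1 + l2Vec q p2 := by
  rw [l2Vec_eq_dist, l2Vec_eq_dist, l2Vec_eq_dist]
  rw [dist_comm ((WithLp.equiv 2 (Fin k → ℝ)).symm q)]
  exact dist_triangle _ _ _

lemma entry_le_one {p : Fin k → ℝ} (hp : p ∈ stdSimplex ℝ (Fin k)) (a : Fin k) : p a ≤ 1 := by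
  rw [← hp.2]
  exact Finset.single_le_sum (fun i _ => hp.1 i) (Finset.mem_univ a)

lemma l2Vec_le_sqrt_two {p q : Fin k → ℝ} (hp : p ∈ stdSimplex ℝ (Fin k))
    (hq : q ∈ stdSimplex ℝ (Fin k)) : l2Vec p q ≤ Real.sqrt 2 := by
  unfold l2Vec
  apply Real.sqrt_le_sqrt
  have : ∀ a : Fin k, (p a - q a) ^ 2 ≤ p a + q a := by
    intro a
    have h1 := hp.1 a; have h2 := hq.1 a
    have h3 := entry_le_one hp a; have h4 := entry_le_one hq a
    nlinarith [sq_abs (p a - q a), abs_nonneg (p a - q a)]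
  calc ∑ a, (p a - q a) ^ 2 ≤ ∑ a, (p a + q a) := Finset.sum_le_sum fun a _ => this a
    _ = 2 := by rw [Finset.sum_add_distrib, hp.2, hq.2]; norm_num

/- ham facts -/

lemma ham_eq {𝒳 : Type*} [DecidableEq 𝒳] (x y : Fin n → 𝒳) :
    ham x y = (Finset.univ.filter fun i => x i ≠ y i).card := by
  unfold ham
  exact congrArg Finset.card (Finset.filter_congr_decidable _ _ _)

lemma ham_comm {𝒳 : Type*} (x y : Fin n → 𝒳) : ham x y = ham y x := by
  classical
  rw [ham_eq, ham_eq]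
  congr 1
  apply Finset.filter_congr
  intro i _
  simp [ne_comm]

lemma ham_cast_eq_sum {𝒳 : Type*} [DecidableEq 𝒳] (x y : Fin n → 𝒳) :
    (ham x y : ℝ) = ∑ i, if x i ≠ y i then (1 : ℝ) else 0 := by
  rw [ham_eq, Finset.card_filter]
  push_cast
  rfl

end KLB
namespace KLB

open Finset

variable {k n : ℕ}

lemma group_privacy {est : Kernel (Fin n → Fin k) (simplex k)} {ε : ℝ} (hε : 0 ≤ ε)
    (hDP : IsDP est ε 0) {S : Set (simplex k)} (hS : MeasurableSet S) :
    ∀ (d : ℕ) (x y : Fin n → Fin k), ham x y ≤ d →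
      est x S ≤ ENNReal.ofReal (Real.exp (ε * d)) * est y S := by
  intro d
  induction d with
  | zero =>
    intro x y h
    have hxy : x = y := by
      funext i
      by_contra hne
      have : 0 < ham x y := by
        rw [ham_eq]
        exact Finset.card_pos.2 ⟨i, by simp [hne]⟩
      omega
    subst hxy
    simp
  | succ d ih =>
    intro x y h
    by_cases hxy : ham x y ≤ d
    · refine (ih x y hxy).trans ?_
      refine mul_le_mul_left (ENNReal.ofReal_le_ofReal (Real.exp_le_exp.2 ?_)) _
      push_cast
      nlinarith
    · have hham : ham x y = d + 1 := by omega
      have hpos : 0 < ham x y := by omega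
      obtain ⟨i, hi⟩ : ∃ i, x i ≠ y i := by
        by_contra hc
        push_neg at hc
        have : x = y := funext hc
        subst this
        rw [ham_eq] at hpos
        simp at hpos
      set z : Fin n → Fin k := Function.update x i (y i) with hz
      have h1 : ham x z ≤ 1 := by
        rw [ham_eq]
        have : (Finset.univ.filter fun j => x j ≠ z j) ⊆ {i} := by
          intro j hj
          simp only [Finset.mem_filter, Finset.mem_univ, true_and] at hj
          simp only [Finset.mem_singleton]
          by_contra hne
          apply hj
          simp [hz, Function.update_of_ne hne]
        calc _ ≤ ({i} : Finset (Fin n)).card := Finset.card_le_card this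
          _ = 1 := Finset.card_singleton i
      have h2 : ham z y ≤ d := by
        rw [ham_eq]
        have hsub : (Finset.univ.filter fun j => z j ≠ y j) ⊆
            (Finset.univ.filter fun j => x j ≠ y j) \ {i} := by
          intro j hj
          simp only [Finset.mem_filter, Finset.mem_univ, true_and, Finset.mem_sdiff,
            Finset.mem_singleton] at hj ⊢
          by_cases hji : j = i
          · subst hji; exfalso; apply hj; simp [hz]
          · exact ⟨by simpa [hz, Function.update_of_ne hji] using hj, hji⟩
        have hcard : ((Finset.univ.filter fun j => x j ≠ y j) \ {i}).card
            = (Finset.univ.filter fun j => x j ≠ y j).card - 1 := by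
          rw [Finset.card_sdiff_of_subset (by simp [hi])]
          simp
        calc _ ≤ _ := Finset.card_le_card hsub
          _ = _ := hcard
          _ ≤ d := by rw [← ham_eq, hham]; omega
      calc est x S ≤ ENNReal.ofReal (Real.exp ε) * est z S + ENNReal.ofReal 0 :=
            hDP x z h1 S hS
        _ = ENNReal.ofReal (Real.exp ε) * est z S := by simp
        _ ≤ ENNReal.ofReal (Real.exp ε) * (ENNReal.ofReal (Real.exp (ε * d)) * est y S) := by
            gcongr
            exact ih z y h2
        _ = ENNReal.ofReal (Real.exp (ε * ((d : ℕ) + 1 : ℕ))) * est y S := by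
            rw [← mul_assoc, ← ENNReal.ofReal_mul (Real.exp_pos ε).le, ← Real.exp_add]
            congr 2
            push_cast
            ring

/-- Real-valued group privacy. -/
lemma ES_le_exp_mul {est : Kernel (Fin n → Fin k) (simplex k)} [IsMarkovKernel est]
    {ε : ℝ} (hε : 0 ≤ ε) (hDP : IsDP est ε 0) {S : Set (simplex k)} (hS : MeasurableSet S)
    (x y : Fin n → Fin k) :
    (est x S).toReal ≤ Real.exp (ε * ham x y) * (est y S).toReal := by
  have h := group_privacy hε hDP hS (ham x y) x y le_rfl
  have hfin : ENNReal.ofReal (Real.exp (ε * ham x y)) * est y S ≠ ⊤ := by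
    apply ENNReal.mul_ne_top ENNReal.ofReal_ne_top
    exact (measure_lt_top _ _).ne
  calc (est x S).toReal ≤ (ENNReal.ofReal (Real.exp (ε * ham x y)) * est y S).toReal :=
        ENNReal.toReal_mono hfin h
    _ = Real.exp (ε * ham x y) * (est y S).toReal := by
        rw [ENNReal.toReal_mul, ENNReal.toReal_ofReal (Real.exp_pos _).le]

/- measures and sums -/

lemma discMeasure_singleton (p : Fin k → ℝ) (a : Fin k) :
    discMeasure p {a} = ENNReal.ofReal (p a) := by
  unfold discMeasure
  rw [Measure.finset_sum_apply]
  have : ∀ i : Fin k, (ENNReal.ofReal (p i) • Measure.dirac i) ({a} : Set (Fin k))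
      = if i = a then ENNReal.ofReal (p i) else 0 := by
    intro i
    rw [Measure.smul_apply, Measure.dirac_apply' _ (measurableSet_singleton a)]
    by_cases h : i = a <;> simp [Set.indicator, h]
  rw [Finset.sum_congr rfl fun i _ => this i, Finset.sum_ite_eq']
  simp

lemma discMeasure_finite (p : Fin k → ℝ) : IsFiniteMeasure (discMeasure p) := by
  constructor
  unfold discMeasure
  rw [Measure.finset_sum_apply]
  refine ENNReal.sum_lt_top.2 fun a _ => ?_
  rw [Measure.smul_apply, Measure.dirac_apply' _ MeasurableSet.univ]
  simp only [Set.indicator_univ, Pi.one_apply, smul_eq_mul, mul_one]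
  exact ENNReal.ofReal_lt_top

lemma iid_singleton (p : Fin k → ℝ) (hp : ∀ a, 0 ≤ p a) (x : Fin n → Fin k) :
    iidSamples n p {x} = ENNReal.ofReal (W p x) := by
  have := discMeasure_finite (k := k) p
  unfold iidSamples
  rw [← Set.univ_pi_singleton x, Measure.pi_pi]
  unfold W
  rw [ENNReal.ofReal_prod_of_nonneg fun i _ => hp (x i)]
  exact Finset.prod_congr rfl fun i _ => discMeasure_singleton p (x i)

lemma lintegral_iid (p : Fin k → ℝ) (hp : ∀ a, 0 ≤ p a) (f : (Fin n → Fin k) → ENNReal) :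
    ∫⁻ x, f x ∂(iidSamples n p) = ∑ x : Fin n → Fin k, f x * ENNReal.ofReal (W p x) := by
  rw [lintegral_fintype]
  exact Finset.sum_congr rfl fun x _ => by rw [iid_singleton p hp]

end KLB
namespace KLB

open Finset

variable {k n : ℕ}

lemma meas_l2 (p : Fin k → ℝ) :
    Measurable fun q : simplex k => ENNReal.ofReal (l2Vec q.1 p) := by
  apply ENNReal.measurable_ofReal.comp
  unfold l2Vec
  apply Measurable.sqrt
  exact Finset.measurable_sum _ fun a _ =>
    (((measurable_pi_apply a).comp measurable_subtype_coe).sub measurable_const).pow_const 2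

lemma inner_le_sqrt_two (est : Kernel (Fin n → Fin k) (simplex k)) [IsMarkovKernel est]
    {p : Fin k → ℝ} (hp : p ∈ stdSimplex ℝ (Fin k)) (x : Fin n → Fin k) :
    ∫⁻ q, ENNReal.ofReal (l2Vec q.1 p) ∂(est x) ≤ ENNReal.ofReal (Real.sqrt 2) := by
  calc ∫⁻ q, ENNReal.ofReal (l2Vec q.1 p) ∂(est x)
      ≤ ∫⁻ _q, ENNReal.ofReal (Real.sqrt 2) ∂(est x) :=
        lintegral_mono fun q => ENNReal.ofReal_le_ofReal (l2Vec_le_sqrt_two q.2 hp)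
    _ = ENNReal.ofReal (Real.sqrt 2) := by rw [lintegral_const, measure_univ, mul_one]

/-- Expected loss of the estimator on dataset `x`, for true parameter `p`. -/
noncomputable def G (est : Kernel (Fin n → Fin k) (simplex k)) (p : Fin k → ℝ)
    (x : Fin n → Fin k) : ℝ :=
  (∫⁻ q, ENNReal.ofReal (l2Vec q.1 p) ∂(est x)).toReal

lemma G_nonneg (est : Kernel (Fin n → Fin k) (simplex k)) (p : Fin k → ℝ)
    (x : Fin n → Fin k) : 0 ≤ G est p x := ENNReal.toReal_nonneg

lemma G_ne_top (est : Kernel (Fin n → Fin k) (simplex k)) [IsMarkovKernel est]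
    {p : Fin k → ℝ} (hp : p ∈ stdSimplex ℝ (Fin k)) (x : Fin n → Fin k) :
    ∫⁻ q, ENNReal.ofReal (l2Vec q.1 p) ∂(est x) ≠ ⊤ :=
  ((inner_le_sqrt_two est hp x).trans_lt ENNReal.ofReal_lt_top).ne

lemma le_G_add_G (est : Kernel (Fin n → Fin k) (simplex k)) [IsMarkovKernel est]
    {p1 p2 : Fin k → ℝ} (hp1 : p1 ∈ stdSimplex ℝ (Fin k)) (hp2 : p2 ∈ stdSimplex ℝ (Fin k))
    (x : Fin n → Fin k) :
    l2Vec p1 p2 ≤ G est p1 x + G est p2 x := by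
  have key : ENNReal.ofReal (l2Vec p1 p2) ≤
      (∫⁻ q, ENNReal.ofReal (l2Vec q.1 p1) ∂(est x)) +
      (∫⁻ q, ENNReal.ofReal (l2Vec q.1 p2) ∂(est x)) := by
    rw [← lintegral_add_left (meas_l2 p1)]
    calc ENNReal.ofReal (l2Vec p1 p2)
        = ∫⁻ _q, ENNReal.ofReal (l2Vec p1 p2) ∂(est x) := by
          rw [lintegral_const, measure_univ, mul_one]
      _ ≤ ∫⁻ q, ENNReal.ofReal (l2Vec q.1 p1) + ENNReal.ofReal (l2Vec q.1 p2) ∂(est x) := by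
          apply lintegral_mono
          intro q
          exact (ENNReal.ofReal_le_ofReal (l2Vec_triangle q.1 p1 p2)).trans ENNReal.ofReal_add_le
  have hfin : (∫⁻ q, ENNReal.ofReal (l2Vec q.1 p1) ∂(est x)) +
      (∫⁻ q, ENNReal.ofReal (l2Vec q.1 p2) ∂(est x)) ≠ ⊤ :=
    ENNReal.add_ne_top.2 ⟨G_ne_top est hp1 x, G_ne_top est hp2 x⟩
  have := ENNReal.toReal_mono hfin key
  rwa [ENNReal.toReal_ofReal (l2Vec_nonneg p1 p2), ENNReal.toReal_add
    (G_ne_top est hp1 x) (G_ne_top est hp2 x)] at this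

lemma hyp_sum (est : Kernel (Fin n → Fin k) (simplex k)) [IsMarkovKernel est]
    {p : Fin k → ℝ} (hp : p ∈ stdSimplex ℝ (Fin k)) {α : ℝ} (hα : 0 ≤ α)
    (h : ∫⁻ x, ∫⁻ q, ENNReal.ofReal (l2Vec q.1 p) ∂(est x) ∂(iidSamples n p)
      ≤ ENNReal.ofReal α) :
    ∑ x : Fin n → Fin k, W p x * G est p x ≤ α := by
  rw [lintegral_iid p hp.1] at h
  have hsum : (∑ x : Fin n → Fin k,
      (∫⁻ q, ENNReal.ofReal (l2Vec q.1 p) ∂(est x)) * ENNReal.ofReal (W p x)).toReal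
      = ∑ x : Fin n → Fin k, W p x * G est p x := by
    rw [ENNReal.toReal_sum]
    · refine Finset.sum_congr rfl fun x _ => ?_
      rw [ENNReal.toReal_mul, ENNReal.toReal_ofReal (W_nonneg hp.1 x)]
      unfold G; ring
    · intro x _
      exact ENNReal.mul_ne_top (G_ne_top est hp x) ENNReal.ofReal_ne_top
  rw [← hsum]
  exact ENNReal.toReal_le_of_le_ofReal hα h

lemma sqrt_prod {ι : Type*} (s : Finset ι) (f : ι → ℝ) (hf : ∀ i ∈ s, 0 ≤ f i) :
    Real.sqrt (∏ i ∈ s, f i) = ∏ i ∈ s, Real.sqrt (f i) := by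
  classical
  induction s using Finset.cons_induction with
  | empty => simp
  | cons a s ha ih =>
    rw [Finset.prod_cons, Finset.prod_cons,
      Real.sqrt_mul (hf a (Finset.mem_cons_self a s)), ih fun i hi => hf i (by simp [hi])]

lemma sum_two {i0 i1 : Fin k} (h : i0 ≠ i1) (u v : ℝ) :
    ∑ a, (if a = i0 then u else if a = i1 then v else 0) = u + v := by
  have key : ∀ a : Fin k, (if a = i0 then u else if a = i1 then v else 0)
      = (if a = i0 then u else 0) + (if a = i1 then v else 0) := by
    intro a
    by_cases h0 : a = i0
    · have h1 : ¬ a = i1 := by rw [h0]; exact h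
      simp only [if_pos h0, if_neg h1]; ring
    · by_cases h1 : a = i1
      · simp only [if_neg h0, if_pos h1]; ring
      · simp only [if_neg h0, if_neg h1]; ring
  rw [Finset.sum_congr rfl fun a _ => key a, Finset.sum_add_distrib,
    Finset.sum_ite_eq', Finset.sum_ite_eq']
  simp

set_option maxHeartbeats 2000000 in
/-- Le Cam two-point bound. -/
lemma lecam {α : ℝ} (hk : 2 ≤ k) (est : Kernel (Fin n → Fin k) (simplex k))
    [IsMarkovKernel est] (hα : 0 < α)
    (hacc : ∀ p : simplex k,
      ∫⁻ x, ∫⁻ q, ENNReal.ofReal (l2Vec q.1 p.1) ∂(est x) ∂(iidSamples n p.1)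
        ≤ ENNReal.ofReal α) :
    1 ≤ 64 * α ^ 2 * (n + 1) := by
  set γ : ℝ := Real.sqrt (1 / (8 * (n + 1))) with hγdef
  have hγpos : 0 < γ := Real.sqrt_pos.2 (by positivity)
  have hγsq : γ ^ 2 = 1 / (8 * (n + 1)) := Real.sq_sqrt (by positivity)
  have hkey : 8 * ((n:ℝ) + 1) * γ ^ 2 = 1 := by rw [hγsq]; field_simp
  have hγsq_le : γ ^ 2 ≤ 1 / 8 := by nlinarith [sq_nonneg γ, Nat.cast_nonneg (α := ℝ) n]
  have hγ_le : γ ≤ 1 / 2 := by nlinarith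
  obtain ⟨i0, i1, hne⟩ : ∃ i0 i1 : Fin k, i0 ≠ i1 :=
    ⟨⟨0, by omega⟩, ⟨1, by omega⟩, by simp [Fin.ne_iff_vne]⟩
  set p1 : Fin k → ℝ := fun a => if a = i0 then 1/2 + γ else if a = i1 then 1/2 - γ else 0
    with hp1def
  set p2 : Fin k → ℝ := fun a => if a = i0 then 1/2 - γ else if a = i1 then 1/2 + γ else 0
    with hp2def
  have hp1 : p1 ∈ stdSimplex ℝ (Fin k) := by
    constructor
    · intro a
      simp only [hp1def]
      by_cases h0 : a = i0
      · rw [if_pos h0]; nlinarith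
      · by_cases h1 : a = i1
        · rw [if_neg h0, if_pos h1]; nlinarith
        · rw [if_neg h0, if_neg h1]
    · rw [hp1def]; rw [sum_two hne]; ring
  have hp2 : p2 ∈ stdSimplex ℝ (Fin k) := by
    constructor
    · intro a
      simp only [hp2def]
      by_cases h0 : a = i0
      · rw [if_pos h0]; nlinarith
      · by_cases h1 : a = i1
        · rw [if_neg h0, if_pos h1]; nlinarith
        · rw [if_neg h0, if_neg h1]
    · rw [hp2def]; rw [sum_two hne]; ring
  have hA1 : ∑ x : Fin n → Fin k, W p1 x * G est p1 x ≤ α :=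
    hyp_sum est hp1 hα.le (hacc ⟨p1, hp1⟩)
  have hA2 : ∑ x : Fin n → Fin k, W p2 x * G est p2 x ≤ α :=
    hyp_sum est hp2 hα.le (hacc ⟨p2, hp2⟩)
  -- the l2 distance between p1 and p2
  have hl2 : l2Vec p1 p2 = Real.sqrt (8 * γ ^ 2) := by
    unfold l2Vec
    congr 1
    have key : ∀ a : Fin k, (p1 a - p2 a) ^ 2
        = if a = i0 then 4 * γ ^ 2 else if a = i1 then 4 * γ ^ 2 else 0 := by
      intro a
      simp only [hp1def, hp2def]
      by_cases h0 : a = i0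
      · rw [if_pos h0, if_pos h0, if_pos h0]; ring
      · by_cases h1 : a = i1
        · rw [if_neg h0, if_neg h0, if_neg h0, if_pos h1, if_pos h1, if_pos h1]; ring
        · rw [if_neg h0, if_neg h0, if_neg h0, if_neg h1, if_neg h1, if_neg h1]; ring
    rw [Finset.sum_congr rfl fun a _ => key a, sum_two hne]
    ring
  -- Bhattacharyya computation
  have hbc_pt : ∀ a : Fin k, Real.sqrt (p1 a * p2 a)
      = if a = i0 then Real.sqrt (1/4 - γ^2) else if a = i1 then Real.sqrt (1/4 - γ^2) else 0 := by
    intro a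
    simp only [hp1def, hp2def]
    by_cases h0 : a = i0
    · rw [if_pos h0, if_pos h0, if_pos h0]
      congr 1; ring
    · by_cases h1 : a = i1
      · rw [if_neg h0, if_neg h0, if_neg h0, if_pos h1, if_pos h1, if_pos h1]
        congr 1; ring
      · rw [if_neg h0, if_neg h0, if_neg h0, if_neg h1, if_neg h1, if_neg h1]
        simp
  have hbc : ∑ a, Real.sqrt (p1 a * p2 a) = 2 * Real.sqrt (1/4 - γ^2) := by
    rw [Finset.sum_congr rfl fun a _ => hbc_pt a, sum_two hne]
    ring
  -- BC of products
  have hBC : ∑ x : Fin n → Fin k, Real.sqrt (W p1 x * W p2 x)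
      = (2 * Real.sqrt (1/4 - γ^2)) ^ n := by
    have : ∀ x : Fin n → Fin k, Real.sqrt (W p1 x * W p2 x)
        = ∏ i, Real.sqrt (p1 (x i) * p2 (x i)) := by
      intro x
      unfold W
      rw [← Finset.prod_mul_distrib]
      exact sqrt_prod _ _ fun i _ => mul_nonneg (hp1.1 _) (hp2.1 _)
    rw [Finset.sum_congr rfl fun x _ => this x,
      sum_pi_prod fun _ a => Real.sqrt (p1 a * p2 a)]
    rw [Finset.prod_congr rfl fun (i : Fin n) _ => hbc, Finset.prod_const, Finset.card_univ,
      Fintype.card_fin]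
  have hquarter : (0:ℝ) ≤ 1/4 - γ^2 := by nlinarith
  have hBCsq : ((2 * Real.sqrt (1/4 - γ^2)) ^ n) ^ 2 = (1 - 4 * γ^2) ^ n := by
    rw [← pow_mul, mul_comm n 2, pow_mul]
    congr 1
    rw [mul_pow, Real.sq_sqrt hquarter]
    ring
  have hBern : (1:ℝ) / 2 ≤ (1 - 4 * γ^2) ^ n := by
    have h2 := one_add_mul_le_pow (a := -(4*γ^2)) (by nlinarith) n
    have h3 : (1:ℝ)/2 ≤ 1 + (n:ℝ) * (-(4*γ^2)) := by
      nlinarith [sq_nonneg γ, Nat.cast_nonneg (α := ℝ) n]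
    calc (1:ℝ)/2 ≤ 1 + (n:ℝ) * (-(4*γ^2)) := h3
      _ ≤ (1 + -(4*γ^2)) ^ n := h2
      _ = (1 - 4*γ^2) ^ n := by ring_nf
  -- min-sum lower bound
  set Smin : ℝ := ∑ x : Fin n → Fin k, min (W p1 x) (W p2 x) with hSmin
  have hmax_le : ∑ x : Fin n → Fin k, max (W p1 x) (W p2 x) ≤ 2 := by
    have : ∀ x : Fin n → Fin k, max (W p1 x) (W p2 x) ≤ W p1 x + W p2 x :=
      fun x => max_le_add_of_nonneg (W_nonneg hp1.1 x) (W_nonneg hp2.1 x)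
    calc ∑ x : Fin n → Fin k, max (W p1 x) (W p2 x)
        ≤ ∑ x : Fin n → Fin k, (W p1 x + W p2 x) := Finset.sum_le_sum fun x _ => this x
      _ = 2 := by rw [Finset.sum_add_distrib, sum_W, sum_W, hp1.2, hp2.2]; norm_num
  have hCS : ((2 * Real.sqrt (1/4 - γ^2)) ^ n) ^ 2 ≤ Smin * 2 := by
    have heq : ∀ x : Fin n → Fin k, Real.sqrt (W p1 x * W p2 x)
        = Real.sqrt (min (W p1 x) (W p2 x)) * Real.sqrt (max (W p1 x) (W p2 x)) := by
      intro x
      rw [← Real.sqrt_mul (le_min (W_nonneg hp1.1 x) (W_nonneg hp2.1 x)), min_mul_max]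
    have hCS' := Finset.sum_mul_sq_le_sq_mul_sq Finset.univ
      (fun x : Fin n → Fin k => Real.sqrt (min (W p1 x) (W p2 x)))
      (fun x : Fin n → Fin k => Real.sqrt (max (W p1 x) (W p2 x)))
    rw [← hBC]
    calc (∑ x : Fin n → Fin k, Real.sqrt (W p1 x * W p2 x)) ^ 2
        = (∑ x : Fin n → Fin k, Real.sqrt (min (W p1 x) (W p2 x))
            * Real.sqrt (max (W p1 x) (W p2 x))) ^ 2 := by
          rw [Finset.sum_congr rfl fun x _ => heq x]
      _ ≤ (∑ x : Fin n → Fin k, Real.sqrt (min (W p1 x) (W p2 x)) ^ 2)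
            * ∑ x : Fin n → Fin k, Real.sqrt (max (W p1 x) (W p2 x)) ^ 2 := hCS'
      _ = Smin * ∑ x : Fin n → Fin k, max (W p1 x) (W p2 x) := by
          rw [hSmin]
          congr 1
          · exact Finset.sum_congr rfl fun x _ => Real.sq_sqrt
              (le_min (W_nonneg hp1.1 x) (W_nonneg hp2.1 x))
          · exact Finset.sum_congr rfl fun x _ => Real.sq_sqrt
              (le_max_of_le_left (W_nonneg hp1.1 x))
      _ ≤ Smin * 2 := by
          apply mul_le_mul_of_nonneg_left hmax_le
          rw [hSmin]
          exact Finset.sum_nonneg fun x _ => le_min (W_nonneg hp1.1 x) (W_nonneg hp2.1 x)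
  have hSmin_ge : 1/4 ≤ Smin := by nlinarith [hBern, hBCsq, hCS]
  -- Le Cam chain
  have hchain : l2Vec p1 p2 * Smin ≤ 2 * α := by
    have hterm : ∀ x : Fin n → Fin k,
        min (W p1 x) (W p2 x) * l2Vec p1 p2 ≤ W p1 x * G est p1 x + W p2 x * G est p2 x := by
      intro x
      have hmin0 : 0 ≤ min (W p1 x) (W p2 x) := le_min (W_nonneg hp1.1 x) (W_nonneg hp2.1 x)
      calc min (W p1 x) (W p2 x) * l2Vec p1 p2
          ≤ min (W p1 x) (W p2 x) * (G est p1 x + G est p2 x) :=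
            mul_le_mul_of_nonneg_left (le_G_add_G est hp1 hp2 x) hmin0
        _ = min (W p1 x) (W p2 x) * G est p1 x + min (W p1 x) (W p2 x) * G est p2 x := by ring
        _ ≤ W p1 x * G est p1 x + W p2 x * G est p2 x := by
            apply add_le_add
            · exact mul_le_mul_of_nonneg_right (min_le_left _ _) (G_nonneg est p1 x)
            · exact mul_le_mul_of_nonneg_right (min_le_right _ _) (G_nonneg est p2 x)
    calc l2Vec p1 p2 * Smin = ∑ x : Fin n → Fin k, min (W p1 x) (W p2 x) * l2Vec p1 p2 := by
          rw [hSmin, ← Finset.sum_mul]; ring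
      _ ≤ ∑ x : Fin n → Fin k, (W p1 x * G est p1 x + W p2 x * G est p2 x) :=
          Finset.sum_le_sum fun x _ => hterm x
      _ = (∑ x : Fin n → Fin k, W p1 x * G est p1 x)
          + ∑ x : Fin n → Fin k, W p2 x * G est p2 x := Finset.sum_add_distrib
      _ ≤ 2 * α := by linarith
  -- numerics
  have hl2val : l2Vec p1 p2 = Real.sqrt (1 / (n+1)) := by
    rw [hl2, hγsq]
    congr 1
    field_simp
  have hfinal : Real.sqrt (1 / (n+1)) ≤ 8 * α := by
    have h0 : (0:ℝ) < Real.sqrt (1 / (n+1)) := Real.sqrt_pos.2 (by positivity)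
    nlinarith [hchain, hSmin_ge, hl2val]
  have hsq : (1:ℝ) / (n+1) ≤ 64 * α^2 := by
    have := Real.sq_sqrt (show (0:ℝ) ≤ 1 / (n+1) by positivity)
    nlinarith [hfinal, Real.sqrt_nonneg (1 / ((n:ℝ)+1))]
  rw [div_le_iff₀ (by positivity)] at hsq
  nlinarith

end KLB
namespace KLB

open Finset

variable {k n : ℕ}

noncomputable def ES {k n : ℕ} (est : Kernel (Fin n → Fin k) (simplex k))
    (S : Set (simplex k)) (x : Fin n → Fin k) : ℝ := (est x S).toReal

lemma ES_nonneg (est : Kernel (Fin n → Fin k) (simplex k)) (S : Set (simplex k))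
    (x : Fin n → Fin k) : 0 ≤ ES est S x := ENNReal.toReal_nonneg

lemma ES_le_one (est : Kernel (Fin n → Fin k) (simplex k)) [IsMarkovKernel est]
    (S : Set (simplex k)) (x : Fin n → Fin k) : ES est S x ≤ 1 := by
  have h : est x S ≤ 1 := prob_le_one
  have := ENNReal.toReal_mono ENNReal.one_ne_top h
  simpa [ES] using this

lemma ES_ge_exp (est : Kernel (Fin n → Fin k) (simplex k)) [IsMarkovKernel est]
    {ε : ℝ} (hε : 0 ≤ ε) (hDP : IsDP est ε 0) {S : Set (simplex k)} (hS : MeasurableSet S)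
    (x y : Fin n → Fin k) :
    Real.exp (-(ε * ham x y)) * ES est S y ≤ ES est S x := by
  have h := ES_le_exp_mul hε hDP hS y x
  rw [ham_comm y x] at h
  rw [Real.exp_neg, inv_mul_le_iff₀ (Real.exp_pos _)]
  exact h

set_option maxHeartbeats 4000000 in
/-- DP transfer via coupling: if `p` and `q` are close in TV, then acceptance probabilities
under their product measures are close for a DP kernel. -/
lemma transfer (est : Kernel (Fin n → Fin k) (simplex k)) [IsMarkovKernel est]
    {ε : ℝ} (hε : 0 ≤ ε) (hDP : IsDP est ε 0)
    {p q : Fin k → ℝ} (hp : p ∈ stdSimplex ℝ (Fin k)) (hq : q ∈ stdSimplex ℝ (Fin k))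
    {S : Set (simplex k)} (hS : MeasurableSet S)
    {t : ℝ} (ht : 0 < t) (hTV : ∑ a, |p a - q a| ≤ 2 * t) :
    Real.exp (-(2 * n * ε * t)) * ((∑ y : Fin n → Fin k, W q y * ES est S y) - 1/2)
      ≤ ∑ x : Fin n → Fin k, W p x * ES est S x := by
  have hexp_le_one : Real.exp (-(2 * n * ε * t)) ≤ 1 := by
    apply Real.exp_le_one_iff.2
    have h1 : (0:ℝ) ≤ (n:ℝ) * ε * t :=
      mul_nonneg (mul_nonneg (Nat.cast_nonneg n) hε) ht.le
    nlinarith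
  have hXp_nonneg : 0 ≤ ∑ x : Fin n → Fin k, W p x * ES est S x :=
    Finset.sum_nonneg fun x _ => mul_nonneg (W_nonneg hp.1 x) (ES_nonneg est S x)
  -- the matched mass
  set mn : Fin k → ℝ := fun a => min (p a) (q a) with hmn
  set τ : ℝ := ∑ a, (p a - mn a) with hτ
  have hmn_le_p : ∀ a, mn a ≤ p a := fun a => min_le_left _ _
  have hmn_le_q : ∀ a, mn a ≤ q a := fun a => min_le_right _ _
  have hmn_nonneg : ∀ a, 0 ≤ mn a := fun a => le_min (hp.1 a) (hq.1 a)
  have habs : ∀ a, |p a - q a| = (p a - mn a) + (q a - mn a) := by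
    intro a
    rcases le_total (p a) (q a) with h | h
    · rw [abs_of_nonpos (by linarith)]
      simp only [hmn]
      rw [min_eq_left h]
      ring
    · rw [abs_of_nonneg (by linarith)]
      simp only [hmn]
      rw [min_eq_right h]
      ring
  have hsum_eq : ∑ a, (q a - mn a) = τ := by
    rw [hτ]
    have h1 : ∑ a, (q a - mn a) = 1 - ∑ a, mn a := by
      rw [Finset.sum_sub_distrib, hq.2]
    have h2 : ∑ a, (p a - mn a) = 1 - ∑ a, mn a := by
      rw [Finset.sum_sub_distrib, hp.2]
    rw [h1, h2]
  have hτt : τ ≤ t := by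
    have h2τ : 2 * τ = ∑ a, |p a - q a| := by
      rw [Finset.sum_congr rfl fun a _ => habs a, Finset.sum_add_distrib, hsum_eq, hτ]
      ring
    linarith
  have hτ_nonneg : 0 ≤ τ :=
    Finset.sum_nonneg fun a _ => by linarith [hmn_le_p a]
  -- degenerate case : p = q
  by_cases hτ0 : τ = 0
  · have hpq : p = q := by
      funext a
      have hle : ∀ b, (0:ℝ) ≤ p b - mn b := fun b => by linarith [hmn_le_p b]
      have hz : p a - mn a = 0 :=
        (Finset.sum_eq_zero_iff_of_nonneg fun b _ => hle b).1 hτ0 a (Finset.mem_univ a)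
      have hz2 : q a - mn a = 0 := by
        have : ∑ b, (q b - mn b) = 0 := by rw [hsum_eq]; exact hτ0
        exact (Finset.sum_eq_zero_iff_of_nonneg
          fun b _ => by linarith [hmn_le_q b]).1 this a (Finset.mem_univ a)
      linarith
    subst hpq
    rcases le_total ((∑ y : Fin n → Fin k, W p y * ES est S y) - 1/2) 0 with h | h
    · calc _ ≤ (0:ℝ) := mul_nonpos_of_nonneg_of_nonpos (Real.exp_pos _).le h
        _ ≤ _ := hXp_nonneg
    · calc Real.exp (-(2 * n * ε * t)) * ((∑ y : Fin n → Fin k, W p y * ES est S y) - 1/2)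
          ≤ 1 * ((∑ y : Fin n → Fin k, W p y * ES est S y) - 1/2) :=
            mul_le_mul_of_nonneg_right hexp_le_one h
        _ ≤ ∑ y : Fin n → Fin k, W p y * ES est S y := by linarith
  have hτpos : 0 < τ := lt_of_le_of_ne hτ_nonneg (Ne.symm hτ0)
  -- the coupling
  set ω : Fin k × Fin k → ℝ :=
    fun c => (if c.1 = c.2 then mn c.1 else 0) + (p c.1 - mn c.1) * (q c.2 - mn c.2) / τ
    with hω
  have hω0 : ∀ c, 0 ≤ ω c := by
    intro c
    simp only [hω]
    have h1 : (0:ℝ) ≤ if c.1 = c.2 then mn c.1 else 0 := by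
      by_cases h : c.1 = c.2
      · rw [if_pos h]; exact hmn_nonneg _
      · rw [if_neg h]
    have h2 : 0 ≤ (p c.1 - mn c.1) * (q c.2 - mn c.2) / τ := by
      apply div_nonneg _ hτ_nonneg
      exact mul_nonneg (by linarith [hmn_le_p c.1]) (by linarith [hmn_le_q c.2])
    linarith
  have hrow : ∀ a, ∑ b, ω (a, b) = p a := by
    intro a
    simp only [hω]
    rw [Finset.sum_add_distrib, Finset.sum_ite_eq]
    have h1 : ∑ b, (p a - mn a) * (q b - mn b) / τ = (p a - mn a) * τ / τ := by
      rw [← hsum_eq, Finset.mul_sum, Finset.sum_div]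
    rw [h1]
    field_simp
    simp
  have hcol : ∀ b, ∑ a, ω (a, b) = q b := by
    intro b
    simp only [hω]
    rw [Finset.sum_add_distrib]
    have h0 : ∑ a, (if a = b then mn a else 0) = mn b := by
      rw [Finset.sum_ite_eq']
      simp
    rw [h0]
    have h1 : ∑ a, (p a - mn a) * (q b - mn b) / τ = τ * (q b - mn b) / τ := by
      rw [← Finset.sum_div, ← Finset.sum_mul, ← hτ]
    rw [h1]
    field_simp
    ring
  have htot : ∑ c : Fin k × Fin k, ω c = 1 := by
    rw [Fintype.sum_prod_type]
    rw [Finset.sum_congr rfl fun a _ => hrow a, hp.2]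
  -- off-diagonal mass
  set ind : Fin k × Fin k → ℝ := fun c => if c.1 = c.2 then 0 else 1 with hind
  have hoffd : ∑ c : Fin k × Fin k, ω c * ind c ≤ τ := by
    have hterm : ∀ c : Fin k × Fin k, ω c * ind c
        ≤ (p c.1 - mn c.1) * (q c.2 - mn c.2) / τ := by
      intro c
      simp only [hω, hind]
      by_cases h : c.1 = c.2
      · rw [if_pos h, if_pos h, mul_zero]
        apply div_nonneg _ hτ_nonneg
        exact mul_nonneg (by linarith [hmn_le_p c.1]) (by linarith [hmn_le_q c.2])
      · rw [if_neg h, if_neg h, mul_one, zero_add]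
    calc ∑ c : Fin k × Fin k, ω c * ind c
        ≤ ∑ c : Fin k × Fin k, (p c.1 - mn c.1) * (q c.2 - mn c.2) / τ :=
          Finset.sum_le_sum fun c _ => hterm c
      _ = τ := by
          rw [Fintype.sum_prod_type]
          have : ∀ a, ∑ b, (p a - mn a) * (q b - mn b) / τ = (p a - mn a) := by
            intro a
            rw [← Finset.sum_div, ← Finset.mul_sum, hsum_eq]
            field_simp
          rw [Finset.sum_congr rfl fun a _ => this a, ← hτ]
  -- lift to the product space
  set Wc : (Fin n → Fin k × Fin k) → ℝ := fun c => ∏ i, ω (c i) with hWc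
  have hWc0 : ∀ c, 0 ≤ Wc c := fun c => Finset.prod_nonneg fun i _ => hω0 _
  set fstF : (Fin n → Fin k × Fin k) → (Fin n → Fin k) := fun c i => (c i).1 with hfst
  set sndF : (Fin n → Fin k × Fin k) → (Fin n → Fin k) := fun c i => (c i).2 with hsnd
  -- marginals
  have hmargF : ∀ f : (Fin n → Fin k) → ℝ,
      ∑ c : Fin n → Fin k × Fin k, Wc c * f (fstF c) = ∑ x : Fin n → Fin k, W p x * f x := by
    intro f
    have heq := Fintype.sum_equiv (Equiv.arrowProdEquivProdArrow (Fin n) (fun _ => Fin k) (fun _ => Fin k))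
      (fun c : Fin n → Fin k × Fin k => Wc c * f (fstF c))
      (fun xy : (Fin n → Fin k) × (Fin n → Fin k) =>
        (∏ i, ω (xy.1 i, xy.2 i)) * f xy.1) (fun c => rfl)
    rw [heq, Fintype.sum_prod_type]
    refine Finset.sum_congr rfl fun x _ => ?_
    have h2 : ∑ y : Fin n → Fin k, ∏ i, ω (x i, y i) = W p x := by
      rw [sum_pi_prod fun i b => ω (x i, b)]
      exact Finset.prod_congr rfl fun i _ => hrow (x i)
    show (∑ y : Fin n → Fin k, (∏ i, ω (x i, y i)) * f x) = W p x * f x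
    rw [← Finset.sum_mul, h2]
  have hmargS : ∀ f : (Fin n → Fin k) → ℝ,
      ∑ c : Fin n → Fin k × Fin k, Wc c * f (sndF c) = ∑ y : Fin n → Fin k, W q y * f y := by
    intro f
    have heq := Fintype.sum_equiv (Equiv.arrowProdEquivProdArrow (Fin n) (fun _ => Fin k) (fun _ => Fin k))
      (fun c : Fin n → Fin k × Fin k => Wc c * f (sndF c))
      (fun xy : (Fin n → Fin k) × (Fin n → Fin k) =>
        (∏ i, ω (xy.1 i, xy.2 i)) * f xy.2) (fun c => rfl)
    rw [heq, Fintype.sum_prod_type_right]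
    refine Finset.sum_congr rfl fun y _ => ?_
    have h2 : ∑ x : Fin n → Fin k, ∏ i, ω (x i, y i) = W q y := by
      rw [sum_pi_prod fun i a => ω (a, y i)]
      exact Finset.prod_congr rfl fun i _ => hcol (y i)
    show (∑ x : Fin n → Fin k, (∏ i, ω (x i, y i)) * f y) = W q y * f y
    rw [← Finset.sum_mul, h2]
  -- hamming weight
  set hamR : (Fin n → Fin k × Fin k) → ℝ := fun c => ∑ j, ind (c j) with hhamR
  have hham_nonneg : ∀ c, 0 ≤ hamR c := by
    intro c
    apply Finset.sum_nonneg
    intro j _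
    simp only [hind]
    by_cases h : (c j).1 = (c j).2
    · rw [if_pos h]
    · rw [if_neg h]; norm_num
  have hham_cast : ∀ c, (ham (fstF c) (sndF c) : ℝ) = hamR c := by
    intro c
    rw [ham_cast_eq_sum]
    refine Finset.sum_congr rfl fun j _ => ?_
    simp only [hfst, hsnd, hind]
    by_cases h : (c j).1 = (c j).2
    · rw [if_neg (by simpa using h), if_pos h]
    · rw [if_pos (by simpa using h), if_neg h]
  -- expected hamming distance
  have hcoordE : ∀ i : Fin n, ∑ c : Fin n → Fin k × Fin k, Wc c * ind (c i)
      = ∑ d : Fin k × Fin k, ω d * ind d := by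
    intro i
    have key : ∀ c : Fin n → Fin k × Fin k,
        Wc c * ind (c i) = ∏ j, (if j = i then ω (c j) * ind (c j) else ω (c j)) := by
      intro c
      have hL : Wc c = (∏ j ∈ Finset.univ.erase i, ω (c j)) * ω (c i) := by
        rw [hWc]
        exact (Finset.prod_erase_mul Finset.univ _ (Finset.mem_univ i)).symm
      have hR : (∏ j, (if j = i then ω (c j) * ind (c j) else ω (c j)))
          = (∏ j ∈ Finset.univ.erase i, (if j = i then ω (c j) * ind (c j) else ω (c j)))
            * (if i = i then ω (c i) * ind (c i) else ω (c i)) :=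
        (Finset.prod_erase_mul Finset.univ _ (Finset.mem_univ i)).symm
      rw [hL, hR, if_pos rfl,
        Finset.prod_congr rfl fun j hj => if_neg (Finset.ne_of_mem_erase hj)]
      ring
    have key2 : ∀ c : Fin n → Fin k × Fin k,
        Wc c * ind (c i)
          = ∏ j, (fun (j : Fin n) (d : Fin k × Fin k) =>
              if j = i then ω d * ind d else ω d) j (c j) := key
    rw [Finset.sum_congr rfl fun c _ => key2 c,
      sum_pi_prod fun (j : Fin n) (d : Fin k × Fin k) => if j = i then ω d * ind d else ω d]
    rw [Finset.prod_eq_single i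
      (fun j _ hj => by simp only [if_neg hj]; exact htot)
      (fun h => absurd (Finset.mem_univ i) h)]
    simp
  have hexpHam : ∑ c : Fin n → Fin k × Fin k, Wc c * hamR c ≤ n * τ := by
    have hswap : ∑ c : Fin n → Fin k × Fin k, Wc c * hamR c
        = ∑ j : Fin n, ∑ c : Fin n → Fin k × Fin k, Wc c * ind (c j) := by
      simp only [hhamR, Finset.mul_sum]
      rw [Finset.sum_comm]
    rw [hswap, Finset.sum_congr rfl fun j _ => hcoordE j, Finset.sum_const,
      Finset.card_univ, Fintype.card_fin, nsmul_eq_mul]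
    exact mul_le_mul_of_nonneg_left hoffd (Nat.cast_nonneg n)
  -- threshold
  set D : ℝ := 2 * n * t with hD
  set indD : (Fin n → Fin k × Fin k) → ℝ := fun c => if hamR c ≤ D then 0 else 1 with hindD
  have hMarkov : ∑ c : Fin n → Fin k × Fin k, Wc c * indD c ≤ 1/2 := by
    rcases Nat.eq_zero_or_pos n with hn0 | hnpos
    · have hz : ∀ c : Fin n → Fin k × Fin k, indD c = 0 := by
        intro c
        simp only [hindD]
        rw [if_pos]
        have h1 : hamR c = 0 := by
          simp only [hhamR]
          apply Finset.sum_eq_zero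
          intro j _
          exact absurd j.2 (by omega)
        rw [h1, hD, hn0]
        norm_num
      rw [Finset.sum_congr rfl fun c _ => by rw [hz c, mul_zero]]
      simp
    · have hDpos : 0 < D := by
        rw [hD]
        have : (1:ℝ) ≤ n := by exact_mod_cast hnpos
        nlinarith
      have hterm : ∀ c : Fin n → Fin k × Fin k, Wc c * indD c ≤ Wc c * (hamR c / D) := by
        intro c
        apply mul_le_mul_of_nonneg_left _ (hWc0 c)
        simp only [hindD]
        by_cases h : hamR c ≤ D
        · rw [if_pos h]
          exact div_nonneg (hham_nonneg c) hDpos.le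
        · rw [if_neg h]
          push_neg at h
          rw [le_div_iff₀ hDpos, one_mul]
          exact h.le
      calc ∑ c : Fin n → Fin k × Fin k, Wc c * indD c
          ≤ ∑ c : Fin n → Fin k × Fin k, Wc c * (hamR c / D) :=
            Finset.sum_le_sum fun c _ => hterm c
        _ = (∑ c : Fin n → Fin k × Fin k, Wc c * hamR c) / D := by
            rw [Finset.sum_div]
            exact Finset.sum_congr rfl fun c _ => by ring
        _ ≤ (n * τ) / D := by gcongr
        _ ≤ 1/2 := by
            rw [div_le_iff₀ hDpos, hD]
            have hn0 : (0:ℝ) ≤ n := Nat.cast_nonneg n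
            nlinarith

  -- main chain
  have hstep1 : ∀ c, Wc c * (Real.exp (-(ε * hamR c)) * ES est S (sndF c))
      ≤ Wc c * ES est S (fstF c) := by
    intro c
    apply mul_le_mul_of_nonneg_left _ (hWc0 c)
    have h := ES_ge_exp est hε hDP hS (fstF c) (sndF c)
    rwa [hham_cast c] at h
  have hstep2 : ∀ c, Wc c * (Real.exp (-(ε * D)) * (ES est S (sndF c) - indD c))
      ≤ Wc c * (Real.exp (-(ε * hamR c)) * ES est S (sndF c)) := by
    intro c
    apply mul_le_mul_of_nonneg_left _ (hWc0 c)
    simp only [hindD]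
    by_cases h : hamR c ≤ D
    · rw [if_pos h, sub_zero]
      apply mul_le_mul_of_nonneg_right _ (ES_nonneg est S _)
      apply Real.exp_le_exp.2
      have h2 : ε * hamR c ≤ ε * D := mul_le_mul_of_nonneg_left h hε
      linarith
    · rw [if_neg h]
      have h1 : ES est S (sndF c) - 1 ≤ 0 := by linarith [ES_le_one est S (sndF c)]
      have h2 : Real.exp (-(ε * D)) * (ES est S (sndF c) - 1) ≤ 0 :=
        mul_nonpos_of_nonneg_of_nonpos (Real.exp_pos _).le h1
      have h3 : 0 ≤ Real.exp (-(ε * hamR c)) * ES est S (sndF c) :=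
        mul_nonneg (Real.exp_pos _).le (ES_nonneg est S _)
      linarith
  have hexp_eq : -(2 * (n:ℝ) * ε * t) = -(ε * D) := by rw [hD]; ring
  rw [hexp_eq, ← hmargF (ES est S), ← hmargS (ES est S)]
  have hsum2 : ∑ c : Fin n → Fin k × Fin k,
        Wc c * (Real.exp (-(ε * D)) * (ES est S (sndF c) - indD c))
      = Real.exp (-(ε * D)) * ((∑ c : Fin n → Fin k × Fin k, Wc c * ES est S (sndF c))
          - ∑ c : Fin n → Fin k × Fin k, Wc c * indD c) := by
    have hterm : ∀ c : Fin n → Fin k × Fin k,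
        Wc c * (Real.exp (-(ε * D)) * (ES est S (sndF c) - indD c))
          = Real.exp (-(ε * D)) * (Wc c * ES est S (sndF c))
            - Real.exp (-(ε * D)) * (Wc c * indD c) := fun c => by ring
    rw [Finset.sum_congr rfl fun c _ => hterm c, Finset.sum_sub_distrib,
      ← Finset.mul_sum, ← Finset.mul_sum]
    ring
  calc Real.exp (-(ε * D))
        * ((∑ c : Fin n → Fin k × Fin k, Wc c * ES est S (sndF c)) - 1/2)
      ≤ Real.exp (-(ε * D)) * ((∑ c : Fin n → Fin k × Fin k, Wc c * ES est S (sndF c))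
          - ∑ c : Fin n → Fin k × Fin k, Wc c * indD c) := by
        apply mul_le_mul_of_nonneg_left _ (Real.exp_pos _).le
        linarith [hMarkov]
    _ = ∑ c : Fin n → Fin k × Fin k,
          Wc c * (Real.exp (-(ε * D)) * (ES est S (sndF c) - indD c)) := hsum2.symm
    _ ≤ ∑ c : Fin n → Fin k × Fin k,
          Wc c * (Real.exp (-(ε * hamR c)) * ES est S (sndF c)) :=
        Finset.sum_le_sum fun c _ => hstep2 c
    _ ≤ ∑ c : Fin n → Fin k × Fin k, Wc c * ES est S (fstF c) :=
        Finset.sum_le_sum fun c _ => hstep1 c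

end KLB
namespace KLB

open Finset

variable {k n K : ℕ}

/-- The `j`-th pair element: `2j` for `true`, `2j+1` for `false`. -/
def pair (h2K : 2*K ≤ k) (j : Fin K) (s : Bool) : Fin k :=
  ⟨2*j.val + (if s then 0 else 1), by have := j.2; cases s <;> simp <;> omega⟩

lemma pair_val (h2K : 2*K ≤ k) (j : Fin K) (s : Bool) :
    (pair h2K j s).val = 2*j.val + (if s then 0 else 1) := rfl

lemma pair_eq_iff {h2K : 2*K ≤ k} {j j' : Fin K} {s s' : Bool} :
    pair h2K j s = pair h2K j' s' ↔ j = j' ∧ s = s' := by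
  constructor
  · intro h
    have hv : 2*j.val + (if s then 0 else 1) = 2*j'.val + (if s' then 0 else 1) := by
      have h2 := congrArg Fin.val h
      rw [pair_val, pair_val] at h2
      exact h2
    cases s <;> cases s' <;> simp at hv <;>
      first
        | exact ⟨Fin.ext (by omega), rfl⟩
        | omega
  · rintro ⟨rfl, rfl⟩
    rfl

lemma pair_injective (h2K : 2*K ≤ k) :
    Function.Injective (fun js : Fin K × Bool => pair h2K js.1 js.2) := by
  rintro ⟨j, s⟩ ⟨j', s'⟩ h
  have h2 := pair_eq_iff.1 h
  exact Prod.ext_iff.2 ⟨h2.1, h2.2⟩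

/-- Two-point family vector supported on the pairs. -/
def pairF (h2K : 2*K ≤ k) (u v : Fin K → ℝ) : Fin k → ℝ :=
  fun a => ∑ j, ((if a = pair h2K j true then u j else 0)
    + (if a = pair h2K j false then v j else 0))

lemma pairF_true (h2K : 2*K ≤ k) (u v : Fin K → ℝ) (j : Fin K) :
    pairF h2K u v (pair h2K j true) = u j := by
  unfold pairF
  have hterm : ∀ j' : Fin K,
      ((if pair h2K j true = pair h2K j' true then u j' else 0)
        + (if pair h2K j true = pair h2K j' false then v j' else 0))
      = if j' = j then u j' else 0 := by
    intro j'
    have h2 : pair h2K j true ≠ pair h2K j' false := by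
      intro h
      exact absurd (pair_eq_iff.1 h).2 (by simp)
    rw [if_neg h2, add_zero]
    by_cases hj : j' = j
    · subst hj; rw [if_pos rfl, if_pos rfl]
    · rw [if_neg, if_neg hj]
      intro h
      exact hj ((pair_eq_iff.1 h).1.symm)
  rw [Finset.sum_congr rfl fun j' _ => hterm j', Finset.sum_ite_eq']
  simp

lemma pairF_false (h2K : 2*K ≤ k) (u v : Fin K → ℝ) (j : Fin K) :
    pairF h2K u v (pair h2K j false) = v j := by
  unfold pairF
  have hterm : ∀ j' : Fin K,
      ((if pair h2K j false = pair h2K j' true then u j' else 0)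
        + (if pair h2K j false = pair h2K j' false then v j' else 0))
      = if j' = j then v j' else 0 := by
    intro j'
    have h2 : pair h2K j false ≠ pair h2K j' true := by
      intro h
      exact absurd (pair_eq_iff.1 h).2 (by simp)
    rw [if_neg h2, zero_add]
    by_cases hj : j' = j
    · subst hj; rw [if_pos rfl, if_pos rfl]
    · rw [if_neg, if_neg hj]
      intro h
      exact hj ((pair_eq_iff.1 h).1.symm)
  rw [Finset.sum_congr rfl fun j' _ => hterm j', Finset.sum_ite_eq']
  simp

lemma pairF_nonneg (h2K : 2*K ≤ k) {u v : Fin K → ℝ} (hu : ∀ j, 0 ≤ u j)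
    (hv : ∀ j, 0 ≤ v j) (a : Fin k) : 0 ≤ pairF h2K u v a := by
  apply Finset.sum_nonneg
  intro j _
  have h1 : (0:ℝ) ≤ if a = pair h2K j true then u j else 0 := by
    by_cases h : a = pair h2K j true
    · rw [if_pos h]; exact hu j
    · rw [if_neg h]
  have h2 : (0:ℝ) ≤ if a = pair h2K j false then v j else 0 := by
    by_cases h : a = pair h2K j false
    · rw [if_pos h]; exact hv j
    · rw [if_neg h]
  linarith

lemma pairF_sum (h2K : 2*K ≤ k) (u v : Fin K → ℝ) :
    ∑ a, pairF h2K u v a = ∑ j, (u j + v j) := by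
  unfold pairF
  rw [Finset.sum_comm]
  refine Finset.sum_congr rfl fun j _ => ?_
  rw [Finset.sum_add_distrib, Finset.sum_ite_eq', Finset.sum_ite_eq']
  simp

lemma pairF_sub (h2K : 2*K ≤ k) (u v u' v' : Fin K → ℝ) (a : Fin k) :
    pairF h2K u v a - pairF h2K u' v' a = pairF h2K (u - u') (v - v') a := by
  unfold pairF
  rw [← Finset.sum_sub_distrib]
  refine Finset.sum_congr rfl fun j _ => ?_
  have e1 : ∀ (c : Prop) [inst : Decidable c] (x y : ℝ),
      (if c then x else 0) - (if c then y else 0) = (if c then x - y else 0) := by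
    intro c inst x y; by_cases h : c <;> simp [h]
  rw [add_sub_add_comm, e1, e1]
  simp [Pi.sub_apply]

lemma pairF_abs_sum_le (h2K : 2*K ≤ k) (u v : Fin K → ℝ) :
    ∑ a, |pairF h2K u v a| ≤ ∑ j, (|u j| + |v j|) := by
  have hpt : ∀ a, |pairF h2K u v a| ≤ pairF h2K (fun j => |u j|) (fun j => |v j|) a := by
    intro a
    unfold pairF
    refine (Finset.abs_sum_le_sum_abs _ _).trans (Finset.sum_le_sum fun j _ => ?_)
    have h1 : |(if a = pair h2K j true then u j else 0)| ≤ (if a = pair h2K j true then |u j| else 0) := by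
      by_cases h : a = pair h2K j true <;> simp [h]
    have h2 : |(if a = pair h2K j false then v j else 0)| ≤ (if a = pair h2K j false then |v j| else 0) := by
      by_cases h : a = pair h2K j false <;> simp [h]
    calc |(if a = pair h2K j true then u j else 0) + (if a = pair h2K j false then v j else 0)|
        ≤ |(if a = pair h2K j true then u j else 0)| + |(if a = pair h2K j false then v j else 0)| :=
          abs_add_le _ _
      _ ≤ _ := add_le_add h1 h2
  calc ∑ a, |pairF h2K u v a| ≤ ∑ a, pairF h2K (fun j => |u j|) (fun j => |v j|) a :=
        Finset.sum_le_sum fun a _ => hpt a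
    _ = ∑ j, (|u j| + |v j|) := pairF_sum h2K _ _

end KLB
namespace KLB

open Finset

variable {k n K : ℕ}

/-- The perturbed distribution indexed by a sign pattern `z`. -/
noncomputable def pz (h2K : 2*K ≤ k) (β : ℝ) (z : Fin K → Bool) : Fin k → ℝ :=
  pairF h2K (fun j => 1/(2*K) + (if z j then β else -β))
            (fun j => 1/(2*K) - (if z j then β else -β))

lemma abs_sg {β : ℝ} (hβ : 0 ≤ β) (b : Bool) : |if b then β else -β| = β := by
  cases b <;> simp [abs_of_nonneg hβ]

lemma pz_mem (h2K : 2*K ≤ k) (hK : 1 ≤ K) {β : ℝ} (hβ0 : 0 ≤ β) (hβK : β ≤ 1/(2*K))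
    (z : Fin K → Bool) : pz h2K β z ∈ stdSimplex ℝ (Fin k) := by
  have hKpos : (0:ℝ) < K := by exact_mod_cast hK
  have hsg : ∀ j, -β ≤ (if z j then β else -β) ∧ (if z j then β else -β) ≤ β := by
    intro j
    have := abs_sg hβ0 (z j)
    constructor <;> [exact (abs_le.1 this.le).1; exact (abs_le.1 this.le).2]
  constructor
  · intro a
    apply pairF_nonneg
    · intro j
      have := (hsg j).1
      linarith
    · intro j
      have := (hsg j).2
      linarith
  · rw [pz, pairF_sum]
    have hKne : (K:ℝ) ≠ 0 := ne_of_gt hKpos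
    have hgen : ∀ s : ℝ, (1/(2*(K:ℝ)) + s) + (1/(2*K) - s) = 1/K := by
      intro s
      field_simp
      ring
    have hterm : ∀ j : Fin K,
        ((1/(2*(K:ℝ)) + (if z j then β else -β)) + (1/(2*K) - (if z j then β else -β)))
          = 1/K := fun j => hgen _
    rw [Finset.sum_congr rfl fun j _ => hterm j, Finset.sum_const, Finset.card_univ,
      Fintype.card_fin, nsmul_eq_mul]
    field_simp

lemma pz_flip_tv (h2K : 2*K ≤ k) {β : ℝ} (hβ0 : 0 ≤ β) (z : Fin K → Bool) (j0 : Fin K) :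
    ∑ a, |pz h2K β z a - pz h2K β (Function.update z j0 (!z j0)) a| ≤ 2 * (2*β) := by
  set z' : Fin K → Bool := Function.update z j0 (!z j0) with hz'
  set U : Fin K → ℝ := (fun j => 1/(2*K) + (if z j then β else -β))
    - (fun j => 1/(2*K) + (if z' j then β else -β)) with hU
  set V : Fin K → ℝ := (fun j => 1/(2*K) - (if z j then β else -β))
    - (fun j => 1/(2*K) - (if z' j then β else -β)) with hV
  have hsub : ∀ a, pz h2K β z a - pz h2K β z' a = pairF h2K U V a := by
    intro a
    exact pairF_sub h2K _ _ _ _ a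
  rw [Finset.sum_congr rfl fun a _ => by rw [hsub a]]
  refine (pairF_abs_sum_le h2K U V).trans ?_
  have habs2 : ∀ b b' : Bool, |(if b then β else -β) - (if b' then β else -β)| ≤ 2*β := by
    intro b b'
    calc |(if b then β else -β) - (if b' then β else -β)|
        ≤ |if b then β else -β| + |if b' then β else -β| := abs_sub _ _
      _ = 2*β := by rw [abs_sg hβ0, abs_sg hβ0]; ring
  have hj : ∀ j, |U j| + |V j| ≤ if j = j0 then 4*β else 0 := by
    intro j
    by_cases hjj : j = j0
    · rw [if_pos hjj]
      have h1 : |U j| ≤ 2*β := by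
        simp only [hU, Pi.sub_apply]
        have : (1/(2*(K:ℝ)) + (if z j then β else -β))
            - (1/(2*K) + (if z' j then β else -β))
            = (if z j then β else -β) - (if z' j then β else -β) := by ring
        rw [this]
        exact habs2 _ _
      have h2 : |V j| ≤ 2*β := by
        simp only [hV, Pi.sub_apply]
        have : (1/(2*(K:ℝ)) - (if z j then β else -β))
            - (1/(2*K) - (if z' j then β else -β))
            = (if z' j then β else -β) - (if z j then β else -β) := by ring
        rw [this]
        exact habs2 _ _
      linarith
    · rw [if_neg hjj]
      have hzz : z' j = z j := Function.update_of_ne hjj _ _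
      have h1 : U j = 0 := by
        simp only [hU, Pi.sub_apply, hzz]
        ring
      have h2 : V j = 0 := by
        simp only [hV, Pi.sub_apply, hzz]
        ring
      rw [h1, h2]
      simp
  calc ∑ j, (|U j| + |V j|) ≤ ∑ j, (if j = j0 then 4*β else 0) :=
        Finset.sum_le_sum fun j _ => hj j
    _ = 4*β := by rw [Finset.sum_ite_eq']; simp
    _ = 2*(2*β) := by ring

/-- Mistake sets. -/
def Aset (h2K : 2*K ≤ k) (j : Fin K) : Set (simplex k) :=
  {q | q.1 (pair h2K j true) - q.1 (pair h2K j false) ≤ 0}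

def Bset (h2K : 2*K ≤ k) (j : Fin K) : Set (simplex k) :=
  {q | 0 ≤ q.1 (pair h2K j true) - q.1 (pair h2K j false)}

def Mis (h2K : 2*K ≤ k) (z : Fin K → Bool) (j : Fin K) : Set (simplex k) :=
  if z j then Aset h2K j else Bset h2K j

lemma meas_eval (a : Fin k) : Measurable fun q : simplex k => q.1 a :=
  (measurable_pi_apply a).comp measurable_subtype_coe

lemma Aset_meas (h2K : 2*K ≤ k) (j : Fin K) : MeasurableSet (Aset h2K j) :=
  measurableSet_le ((meas_eval _).sub (meas_eval _)) measurable_const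

lemma Bset_meas (h2K : 2*K ≤ k) (j : Fin K) : MeasurableSet (Bset h2K j) :=
  measurableSet_le measurable_const ((meas_eval _).sub (meas_eval _))

lemma Mis_meas (h2K : 2*K ≤ k) (z : Fin K → Bool) (j : Fin K) :
    MeasurableSet (Mis h2K z j) := by
  unfold Mis
  by_cases h : z j
  · rw [if_pos h]; exact Aset_meas h2K j
  · rw [if_neg h]; exact Bset_meas h2K j

lemma Mis_union (h2K : 2*K ≤ k) (z : Fin K → Bool) (j : Fin K) :
    Mis h2K z j ∪ Mis h2K (Function.update z j (!z j)) j = Set.univ := by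
  have hAB : Aset h2K j ∪ Bset h2K j = Set.univ := by
    ext q
    simp only [Set.mem_union, Set.mem_univ, iff_true, Aset, Bset, Set.mem_setOf_eq]
    exact le_total _ _
  unfold Mis
  rw [Function.update_self]
  by_cases h : z j
  · rw [if_pos h, h]
    simpa using hAB
  · have h' : z j = false := Bool.eq_false_iff.2 h
    rw [if_neg h, h']
    simp only [Bool.not_false, if_pos]
    rw [Set.union_comm]
    exact hAB

set_option maxHeartbeats 1000000 in
open scoped Classical in
/-- Geometric fact: each mistaken sign costs `2β²` in squared `ℓ₂` loss. -/
lemma loss_lb (h2K : 2*K ≤ k) {β : ℝ} (hβ0 : 0 ≤ β) (z : Fin K → Bool) (q : simplex k) :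
    2*β^2 * ((Finset.univ.filter fun j => q ∈ Mis h2K z j).card : ℝ)
      ≤ (l2Vec q.1 (pz h2K β z))^2 := by
  classical
  set p := pz h2K β z with hp
  have hsq : (l2Vec q.1 p)^2 = ∑ a, (q.1 a - p a)^2 :=
    Real.sq_sqrt (Finset.sum_nonneg fun a _ => sq_nonneg _)
  have himg : ∑ js : Fin K × Bool, (q.1 (pair h2K js.1 js.2) - p (pair h2K js.1 js.2))^2
      ≤ ∑ a, (q.1 a - p a)^2 := by
    have h1 := Finset.sum_image (f := fun a => (q.1 a - p a)^2)
      (g := fun js : Fin K × Bool => pair h2K js.1 js.2) (s := Finset.univ)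
      (fun x _ y _ h => pair_injective h2K h)
    rw [← h1]
    exact Finset.sum_le_sum_of_subset_of_nonneg (Finset.subset_univ _)
      fun _ _ _ => sq_nonneg _
  have hexp : ∑ js : Fin K × Bool, (q.1 (pair h2K js.1 js.2) - p (pair h2K js.1 js.2))^2
      = ∑ j, ((q.1 (pair h2K j true) - p (pair h2K j true))^2
        + (q.1 (pair h2K j false) - p (pair h2K j false))^2) := by
    rw [Fintype.sum_prod_type]
    refine Finset.sum_congr rfl fun j _ => ?_
    rw [Fintype.sum_bool]
  have hterm : ∀ j, (if q ∈ Mis h2K z j then 2*β^2 else 0)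
      ≤ (q.1 (pair h2K j true) - p (pair h2K j true))^2
        + (q.1 (pair h2K j false) - p (pair h2K j false))^2 := by
    intro j
    by_cases hmem : q ∈ Mis h2K z j
    · rw [if_pos hmem]
      have hpt : p (pair h2K j true) = 1/(2*K) + (if z j then β else -β) :=
        pairF_true h2K _ _ j
      have hpf : p (pair h2K j false) = 1/(2*K) - (if z j then β else -β) :=
        pairF_false h2K _ _ j
      set u := q.1 (pair h2K j true) - p (pair h2K j true) with hu
      set v := q.1 (pair h2K j false) - p (pair h2K j false) with hv
      by_cases hzj : z j
      · have hA : q ∈ Aset h2K j := by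
          unfold Mis at hmem
          rwa [if_pos hzj] at hmem
        have hineq : q.1 (pair h2K j true) - q.1 (pair h2K j false) ≤ 0 := hA
        have hsg : (if z j then β else -β) = β := if_pos hzj
        have huv : u - v + 2*β ≤ 0 := by
          rw [hu, hv, hpt, hpf, hsg] at *
          nlinarith [hineq]
        nlinarith [sq_nonneg (u+v), sq_nonneg (u-v), huv, hβ0,
          mul_nonneg (by linarith : (0:ℝ) ≤ -(u-v) - 2*β) (by linarith : (0:ℝ) ≤ -(u-v) + 2*β - 4*β + 4*β)]
      · have hB : q ∈ Bset h2K j := by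
          unfold Mis at hmem
          rwa [if_neg hzj] at hmem
        have hineq : 0 ≤ q.1 (pair h2K j true) - q.1 (pair h2K j false) := hB
        have hsg : (if z j then β else -β) = -β := if_neg hzj
        have huv : 0 ≤ u - v - 2*β := by
          rw [hu, hv, hpt, hpf, hsg] at *
          nlinarith [hineq]
        nlinarith [sq_nonneg (u+v), huv, hβ0,
          mul_nonneg (by linarith : (0:ℝ) ≤ (u-v) - 2*β) (by linarith : (0:ℝ) ≤ (u-v) + 2*β)]
    · rw [if_neg hmem]
      positivity
  have hsum : ∑ j, (if q ∈ Mis h2K z j then 2*β^2 else 0)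
      = 2*β^2 * ((Finset.univ.filter fun j => q ∈ Mis h2K z j).card : ℝ) := by
    rw [← Finset.sum_filter, Finset.sum_const, nsmul_eq_mul]
    try ring
  calc 2*β^2 * ((Finset.univ.filter fun j => q ∈ Mis h2K z j).card : ℝ)
      = ∑ j, (if q ∈ Mis h2K z j then 2*β^2 else 0) := hsum.symm
    _ ≤ ∑ j, ((q.1 (pair h2K j true) - p (pair h2K j true))^2
        + (q.1 (pair h2K j false) - p (pair h2K j false))^2) :=
        Finset.sum_le_sum fun j _ => hterm j
    _ = ∑ js : Fin K × Bool, (q.1 (pair h2K js.1 js.2) - p (pair h2K js.1 js.2))^2 :=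
        hexp.symm
    _ ≤ ∑ a, (q.1 a - p a)^2 := himg
    _ = (l2Vec q.1 p)^2 := hsq.symm

end KLB
namespace KLB

open Finset

variable {k n K : ℕ}

lemma count_real {K : ℕ} {β L : ℝ} {m : ℕ} (hβ : 0 < β) (hm2 : 2*β^2*(m:ℝ) ≤ L^2)
    (hL : 0 ≤ L) (hmK : m ≤ K) : (m:ℝ) ≤ Real.sqrt K / (Real.sqrt 2 * β) * L := by
  have hm0 : (0:ℝ) ≤ m := Nat.cast_nonneg m
  have h3 : Real.sqrt (2*β^2*(m:ℝ)) = Real.sqrt 2 * β * Real.sqrt m := by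
    rw [Real.sqrt_mul (by positivity : (0:ℝ) ≤ 2*β^2),
      Real.sqrt_mul (by norm_num : (0:ℝ) ≤ 2), Real.sqrt_sq hβ.le]
  have h1 : Real.sqrt 2 * β * Real.sqrt m ≤ L := by
    rw [← h3]
    calc Real.sqrt (2*β^2*(m:ℝ)) ≤ Real.sqrt (L^2) := Real.sqrt_le_sqrt hm2
      _ = L := Real.sqrt_sq hL
  have h4 : (m:ℝ) ≤ Real.sqrt K * Real.sqrt m := by
    have h5 : (m:ℝ) = Real.sqrt m * Real.sqrt m := (Real.mul_self_sqrt hm0).symm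
    calc (m:ℝ) = Real.sqrt m * Real.sqrt m := h5
      _ ≤ Real.sqrt K * Real.sqrt m := by
          apply mul_le_mul_of_nonneg_right _ (Real.sqrt_nonneg _)
          exact Real.sqrt_le_sqrt (by exact_mod_cast hmK)
  have hsβ : 0 < Real.sqrt 2 * β := by positivity
  have h6 : Real.sqrt m ≤ L / (Real.sqrt 2 * β) := by
    rw [le_div_iff₀ hsβ]
    nlinarith [h1]
  calc (m:ℝ) ≤ Real.sqrt K * Real.sqrt m := h4
    _ ≤ Real.sqrt K * (L / (Real.sqrt 2 * β)) :=
        mul_le_mul_of_nonneg_left h6 (Real.sqrt_nonneg _)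
    _ = Real.sqrt K / (Real.sqrt 2 * β) * L := by ring

set_option maxHeartbeats 1000000 in
open scoped Classical in
lemma count_bound (h2K : 2*K ≤ k) (hK : 1 ≤ K)
    (est : Kernel (Fin n → Fin k) (simplex k)) [IsMarkovKernel est]
    {β : ℝ} (hβ : 0 < β) (hβK : β ≤ 1/(2*K)) (z : Fin K → Bool) (x : Fin n → Fin k) :
    ∑ j, ES est (Mis h2K z j) x
      ≤ Real.sqrt K / (Real.sqrt 2 * β) * G est (pz h2K β z) x := by
  set c := Real.sqrt K / (Real.sqrt 2 * β) with hc
  have hc0 : 0 ≤ c := by positivity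
  have hpt : ∀ q : simplex k, ∑ j, (Mis h2K z j).indicator (1 : simplex k → ENNReal) q
      ≤ ENNReal.ofReal (c * l2Vec q.1 (pz h2K β z)) := by
    intro q
    have hcount := loss_lb h2K hβ.le z q
    set m := (Finset.univ.filter fun j => q ∈ Mis h2K z j).card with hm
    have hmK : m ≤ K := le_trans (Finset.card_filter_le _ _) (by simp)
    have hreal : (m:ℝ) ≤ c * l2Vec q.1 (pz h2K β z) := by
      rw [hc]
      exact count_real hβ hcount (l2Vec_nonneg _ _) hmK
    have hLHS : ∑ j, (Mis h2K z j).indicator (1 : simplex k → ENNReal) q = (m : ENNReal) := by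
      rw [hm, Finset.card_filter]
      push_cast
      refine Finset.sum_congr rfl fun j _ => ?_
      rw [Set.indicator_apply]
      by_cases h : q ∈ Mis h2K z j <;> simp [h]
    rw [hLHS]
    calc (m : ENNReal) = ENNReal.ofReal (m : ℝ) := by rw [ENNReal.ofReal_natCast]
      _ ≤ _ := ENNReal.ofReal_le_ofReal hreal
  have hEN : ∑ j, est x (Mis h2K z j)
      ≤ ENNReal.ofReal c * ∫⁻ q, ENNReal.ofReal (l2Vec q.1 (pz h2K β z)) ∂(est x) := by
    have h1 : ∀ j ∈ Finset.univ, est x (Mis h2K z j)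
        = ∫⁻ q, (Mis h2K z j).indicator (1 : simplex k → ENNReal) q ∂(est x) :=
      fun j _ => (lintegral_indicator_one (Mis_meas h2K z j)).symm
    rw [Finset.sum_congr rfl h1,
      ← lintegral_finset_sum _ (fun j _ => measurable_one.indicator (Mis_meas h2K z j))]
    calc ∫⁻ q, ∑ j, (Mis h2K z j).indicator (1 : simplex k → ENNReal) q ∂(est x)
        ≤ ∫⁻ q, ENNReal.ofReal (c * l2Vec q.1 (pz h2K β z)) ∂(est x) := lintegral_mono hpt
      _ = ∫⁻ q, ENNReal.ofReal c * ENNReal.ofReal (l2Vec q.1 (pz h2K β z)) ∂(est x) := by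
          congr 1
          funext q
          rw [ENNReal.ofReal_mul hc0]
      _ = ENNReal.ofReal c * ∫⁻ q, ENNReal.ofReal (l2Vec q.1 (pz h2K β z)) ∂(est x) :=
          lintegral_const_mul _ (meas_l2 _)
  have hfinj : ∀ j : Fin K, est x (Mis h2K z j) ≠ ⊤ := fun j => (measure_lt_top _ _).ne
  have hRfin : ENNReal.ofReal c * ∫⁻ q, ENNReal.ofReal (l2Vec q.1 (pz h2K β z)) ∂(est x) ≠ ⊤ :=
    ENNReal.mul_ne_top ENNReal.ofReal_ne_top
      (G_ne_top est (pz_mem h2K hK hβ.le hβK z) x)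
  have hto := ENNReal.toReal_mono hRfin hEN
  rw [ENNReal.toReal_sum (fun j _ => hfinj j), ENNReal.toReal_mul,
    ENNReal.toReal_ofReal hc0] at hto
  exact hto

lemma ES_union_ge (est : Kernel (Fin n → Fin k) (simplex k)) [IsMarkovKernel est]
    {S T : Set (simplex k)} (hST : S ∪ T = Set.univ) (y : Fin n → Fin k) :
    1 ≤ ES est S y + ES est T y := by
  have h := measure_union_le (μ := est y) S T
  rw [hST, measure_univ] at h
  have hfin : est y S + est y T ≠ ⊤ :=
    ENNReal.add_ne_top.2 ⟨(measure_lt_top _ _).ne, (measure_lt_top _ _).ne⟩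
  have hto := ENNReal.toReal_mono hfin h
  rw [ENNReal.toReal_add (measure_lt_top _ _).ne (measure_lt_top _ _).ne] at hto
  simpa [ES] using hto

set_option maxHeartbeats 4000000 in
/-- Assouad-type privacy lower bound. -/
lemma assouad (hK : 1 ≤ K) (h2K : 2*K ≤ k)
    (est : Kernel (Fin n → Fin k) (simplex k)) [IsMarkovKernel est]
    {α ε β : ℝ} (hα : 0 < α) (hε : 0 < ε) (hβ : 0 < β) (hβK : β ≤ 1/(2*K))
    (hβdef : Real.sqrt K * β = 8 * α)
    (hDP : IsDP est ε 0)
    (hacc : ∀ p : simplex k,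
      ∫⁻ x, ∫⁻ q, ENNReal.ofReal (l2Vec q.1 p.1) ∂(est x) ∂(iidSamples n p.1)
        ≤ ENNReal.ofReal α) :
    1 ≤ 4 * n * ε * β := by
  classical
  have hKpos : (0:ℝ) < K := by exact_mod_cast hK
  have hsqK : 0 < Real.sqrt K := Real.sqrt_pos.2 hKpos
  have hKK : Real.sqrt K * Real.sqrt K = (K:ℝ) := Real.mul_self_sqrt (Nat.cast_nonneg K)
  set s : ℝ := Real.sqrt 2 with hs
  have hs_pos : 0 < s := Real.sqrt_pos.2 (by norm_num)
  have hs_sq : s * s = 2 := Real.mul_self_sqrt (by norm_num)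
  have hmem : ∀ z : Fin K → Bool, pz h2K β z ∈ stdSimplex ℝ (Fin k) :=
    fun z => pz_mem h2K hK hβ.le hβK z
  set e : (Fin K → Bool) → Fin K → ℝ :=
    fun z j => ∑ x : Fin n → Fin k, W (pz h2K β z) x * ES est (Mis h2K z j) x with he
  set c := Real.sqrt K / (s * β) with hc
  have hc0 : 0 ≤ c := by positivity
  -- accuracy bound
  have hacc_z : ∀ z, ∑ j, e z j ≤ c * α := by
    intro z
    have hswap : ∑ j, e z j
        = ∑ x : Fin n → Fin k, W (pz h2K β z) x * ∑ j, ES est (Mis h2K z j) x := by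
      simp only [he]
      rw [Finset.sum_comm]
      exact Finset.sum_congr rfl fun x _ => by rw [Finset.mul_sum]
    rw [hswap]
    calc ∑ x : Fin n → Fin k, W (pz h2K β z) x * ∑ j, ES est (Mis h2K z j) x
        ≤ ∑ x : Fin n → Fin k, W (pz h2K β z) x * (c * G est (pz h2K β z) x) := by
          apply Finset.sum_le_sum
          intro x _
          exact mul_le_mul_of_nonneg_left (count_bound h2K hK est hβ hβK z x)
            (W_nonneg (hmem z).1 x)
      _ = c * ∑ x : Fin n → Fin k, W (pz h2K β z) x * G est (pz h2K β z) x := by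
          rw [Finset.mul_sum]
          exact Finset.sum_congr rfl fun x _ => by ring
      _ ≤ c * α := mul_le_mul_of_nonneg_left
          (hyp_sum est (hmem z) hα.le (hacc ⟨_, hmem z⟩)) hc0
  have hcα : c * α = K / (8 * s) := by
    have hα_eq : α = Real.sqrt K * β / 8 := by linarith [hβdef]
    have hstep : c * α = (Real.sqrt K * Real.sqrt K) * β / (s * β * 8) := by
      rw [hc, hα_eq]; ring
    rw [hstep, hKK]
    have hβne : β ≠ 0 := ne_of_gt hβ
    have hsne : s ≠ 0 := ne_of_gt hs_pos
    field_simp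
  -- DP transfer bound
  set C : ℝ := Real.exp (-(2 * n * ε * (2*β))) with hC
  have hC0 : 0 < C := Real.exp_pos _
  have hkey : ∀ (z : Fin K → Bool) (j : Fin K),
      C * (1/2 - e (Function.update z j (!z j)) j) ≤ e z j := by
    intro z j
    set z' := Function.update z j (!z j) with hz'
    have htr := transfer est hε.le hDP (hmem z) (hmem z') (Mis_meas h2K z j)
      (show (0:ℝ) < 2*β by linarith) (pz_flip_tv h2K hβ.le z j)
    have hinner : 1 - e z' j ≤ ∑ y : Fin n → Fin k, W (pz h2K β z') y * ES est (Mis h2K z j) y := by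
      have hun : ∀ y, 1 - ES est (Mis h2K z' j) y ≤ ES est (Mis h2K z j) y := by
        intro y
        have := ES_union_ge est (Mis_union h2K z j) y
        linarith
      have hsumW : ∑ y : Fin n → Fin k, W (pz h2K β z') y = 1 := by
        rw [sum_W, (hmem z').2, one_pow]
      have hstep : ∑ y : Fin n → Fin k, W (pz h2K β z') y * (1 - ES est (Mis h2K z' j) y)
          = 1 - e z' j := by
        simp only [he]
        rw [Finset.sum_congr rfl fun y _ => mul_one_sub (W (pz h2K β z') y) _,
          Finset.sum_sub_distrib, hsumW]
      calc 1 - e z' j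
          = ∑ y : Fin n → Fin k, W (pz h2K β z') y * (1 - ES est (Mis h2K z' j) y) :=
            hstep.symm
        _ ≤ ∑ y : Fin n → Fin k, W (pz h2K β z') y * ES est (Mis h2K z j) y :=
            Finset.sum_le_sum fun y _ => mul_le_mul_of_nonneg_left (hun y)
              (W_nonneg (hmem z').1 y)
    calc C * (1/2 - e z' j) = C * ((1 - e z' j) - 1/2) := by ring
      _ ≤ C * ((∑ y : Fin n → Fin k, W (pz h2K β z') y * ES est (Mis h2K z j) y) - 1/2) := by
          apply mul_le_mul_of_nonneg_left _ hC0.le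
          linarith [hinner]
      _ ≤ e z j := htr
  -- sum over the cube
  set T : ℝ := ∑ z : Fin K → Bool, ∑ j, e z j with hT
  have hcard : (Finset.univ : Finset (Fin K → Bool)).card = 2^K := by
    rw [Finset.card_univ]
    simp [Fintype.card_fun]
  have hTacc : T ≤ (2^K : ℝ) * (K / (8*s)) := by
    rw [hT]
    calc ∑ z : Fin K → Bool, ∑ j, e z j ≤ ∑ _z : Fin K → Bool, c * α :=
          Finset.sum_le_sum fun z _ => hacc_z z
      _ = (2^K : ℝ) * (c * α) := by
          rw [Finset.sum_const, hcard, nsmul_eq_mul]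
          push_cast
          ring
      _ = (2^K : ℝ) * (K / (8*s)) := by rw [hcα]
  have hflip : ∀ j, ∑ z : Fin K → Bool, e (Function.update z j (!z j)) j
      = ∑ z : Fin K → Bool, e z j := by
    intro j
    have hinv : Function.Involutive (fun z : Fin K → Bool => Function.update z j (!z j)) := by
      intro z
      funext i
      by_cases hij : i = j
      · subst hij; simp
      · simp [Function.update_of_ne hij]
    exact Fintype.sum_bijective _ hinv.bijective _ _ (fun z => rfl)
  have hkey_sum : C * ((2^K : ℝ) * K * (1/2) - T) ≤ T := by
    have h1 : ∑ z : Fin K → Bool, ∑ j, C * (1/2 - e (Function.update z j (!z j)) j) ≤ T := by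
      rw [hT]
      exact Finset.sum_le_sum fun z _ => Finset.sum_le_sum fun j _ => hkey z j
    have h2 : ∑ z : Fin K → Bool, ∑ j, C * (1/2 - e (Function.update z j (!z j)) j)
        = C * ((2^K : ℝ) * K * (1/2) - T) := by
      have e1 : ∀ z : Fin K → Bool, ∑ j, C * (1/2 - e (Function.update z j (!z j)) j)
          = (K : ℝ) * (C * (1/2)) - C * ∑ j, e (Function.update z j (!z j)) j := by
        intro z
        rw [Finset.sum_congr rfl fun j (_ : j ∈ Finset.univ) =>
          (by ring : C * (1/2 - e (Function.update z j (!z j)) j)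
            = C * (1/2) - C * e (Function.update z j (!z j)) j)]
        rw [Finset.sum_sub_distrib, Finset.sum_const, Finset.card_univ, Fintype.card_fin,
          nsmul_eq_mul, Finset.mul_sum]
      rw [Finset.sum_congr rfl fun z _ => e1 z, Finset.sum_sub_distrib]
      have e3 : ∑ z : Fin K → Bool, C * ∑ j, e (Function.update z j (!z j)) j = C * T := by
        rw [← Finset.mul_sum]
        congr 1
        calc ∑ z : Fin K → Bool, ∑ j, e (Function.update z j (!z j)) j
            = ∑ j, ∑ z : Fin K → Bool, e (Function.update z j (!z j)) j := Finset.sum_comm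
          _ = ∑ j, ∑ z : Fin K → Bool, e z j := Finset.sum_congr rfl fun j _ => hflip j
          _ = ∑ z : Fin K → Bool, ∑ j, e z j := Finset.sum_comm
          _ = T := hT.symm
      rw [e3, Finset.sum_const, hcard, nsmul_eq_mul]
      push_cast
      ring
    rw [h2] at h1
    exact h1
  -- endgame numerics
  set M : ℝ := (2^K : ℝ) * K with hMdef
  have hM : (0:ℝ) < M := by rw [hMdef]; positivity
  have hT2 : T ≤ M / (8*s) := by
    rw [hMdef]
    calc T ≤ (2^K : ℝ) * (K / (8*s)) := hTacc
      _ = (2^K : ℝ) * K / (8*s) := by ring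
  have hchain : C * (M * (1/2) - M / (8*s)) ≤ M / (8*s) := by
    calc C * (M * (1/2) - M / (8*s)) ≤ C * (M * (1/2) - T) := by
          apply mul_le_mul_of_nonneg_left _ hC0.le
          linarith
      _ ≤ T := hkey_sum
      _ ≤ M / (8*s) := hT2
  have hdiv : C * (1/2 - 1/(8*s)) ≤ 1/(8*s) := by
    apply le_of_mul_le_mul_left _ hM
    calc M * (C * (1/2 - 1/(8*s))) = C * (M*(1/2) - M/(8*s)) := by ring
      _ ≤ M/(8*s) := hchain
      _ = M * (1/(8*s)) := by ring
  by_contra hcon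
  push_neg at hcon
  have hCgt : Real.exp (-1) < C := by
    rw [hC]
    apply Real.exp_lt_exp.2
    nlinarith [hcon]
  have hs_ge1 : 1 ≤ s := by nlinarith [hs_sq, hs_pos]
  have hA : 0 < 1/2 - 1/(8*s) := by
    have h8 : 1/(8*s) ≤ 1/8 := by
      apply one_div_le_one_div_of_le (by norm_num)
      linarith
    linarith
  have hlt : Real.exp (-1) * (1/2 - 1/(8*s)) < 1/(8*s) :=
    lt_of_lt_of_le (mul_lt_mul_of_pos_right hCgt hA) hdiv
  have hE := Real.exp_one_lt_d9
  have hEpos := Real.exp_pos 1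
  have hprod : Real.exp (-1) * Real.exp 1 = 1 := by
    rw [← Real.exp_add]; simp
  have hlt2 : (1/2 - 1/(8*s)) < Real.exp 1 * (1/(8*s)) := by
    have hmul := mul_lt_mul_of_pos_left hlt hEpos
    calc (1/2 - 1/(8*s)) = Real.exp 1 * (Real.exp (-1) * (1/2 - 1/(8*s))) := by
          rw [← mul_assoc, mul_comm (Real.exp 1), hprod, one_mul]
      _ < Real.exp 1 * (1/(8*s)) := hmul
  have h8s : (0:ℝ) < 8*s := by linarith
  have hfin : 4*s - 1 < Real.exp 1 := by
    have h3 := mul_lt_mul_of_pos_right hlt2 h8s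
    have h4 : (1/2 - 1/(8*s)) * (8*s) = 4*s - 1 := by field_simp; ring
    have h5 : Real.exp 1 * (1/(8*s)) * (8*s) = Real.exp 1 := by field_simp
    rw [h4, h5] at h3
    exact h3
  nlinarith [hs_sq, hs_pos, hE, hfin]

end KLB

set_option maxHeartbeats 1000000 in
/-- Sample complexity lower bound for `ε`-DP `k`-ary distribution estimation under `ℓ₂`
distance, small-error regime `α < min(1/√k, 1/48)`: any `ε`-DP estimator achieving expected
`ℓ₂` error at most `α` on every `p ∈ Δ_k` requires `n ≥ c (1/α² + √k/(αε))` samples. -/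
theorem kary_l2_pure_dp_lower_bound_small_error :
    ∃ c : ℝ, 0 < c ∧
      ∀ (k : ℕ), 40 ≤ k → ∀ α : ℝ, 0 < α → α < min (1 / Real.sqrt k) (1 / 48) →
        ∀ ε : ℝ, 0 < ε → ∀ n : ℕ,
        ∀ est : Kernel (Fin n → Fin k) (simplex k), IsMarkovKernel est → IsDP est ε 0 →
          (∀ p : simplex k,
            ∫⁻ x, ∫⁻ q, ENNReal.ofReal (l2Vec q.1 p.1) ∂(est x) ∂(iidSamples n p.1)
              ≤ ENNReal.ofReal α) →
          c * (1 / α ^ 2 + Real.sqrt k / (α * ε)) ≤ n := by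
  
  refine ⟨1/2048, by norm_num, ?_⟩
  intro k hk α hα hαlt ε hε n est hMk hDP hacc
  haveI := hMk
  have hkpos : (0:ℝ) < k := by
    have : (40:ℝ) ≤ k := by exact_mod_cast hk
    linarith
  have hsk : 0 < Real.sqrt k := Real.sqrt_pos.2 hkpos
  have hsk_sq : Real.sqrt k * Real.sqrt k = (k:ℝ) := Real.mul_self_sqrt hkpos.le
  have hα1 : α < 1 / Real.sqrt k := lt_of_lt_of_le hαlt (min_le_left _ _)
  have hα2 : α < 1 / 48 := lt_of_lt_of_le hαlt (min_le_right _ _)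
  -- Part A : statistical bound
  have hA := KLB.lecam (by omega : 2 ≤ k) est hα hacc
  have hα2sq : α^2 < 1/2304 := by nlinarith [hα2, hα]
  have hnA : 1 ≤ 128 * α^2 * n := by
    have hn0 : (0:ℝ) ≤ n := Nat.cast_nonneg n
    nlinarith [hA, hα2sq, sq_nonneg α]
  have hnA' : 1/α^2 ≤ 128 * n := by
    rw [div_le_iff₀ (by positivity)]
    nlinarith [hnA]
  -- Part B : privacy bound
  set K : ℕ := max 1 (k / 256) with hKdef
  have hK1 : 1 ≤ K := le_max_left _ _
  have hKval : K = 1 ∨ (K = k / 256 ∧ 2 ≤ k / 256) := by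
    rcases le_or_gt (k/256) 1 with h | h
    · left; rw [hKdef]; omega
    · right; constructor
      · rw [hKdef]; omega
      · omega
  have h2K : 2*K ≤ k := by rcases hKval with h | ⟨h, h2⟩ <;> omega
  have hKpos : (0:ℝ) < K := by exact_mod_cast hK1
  have hsqK : 0 < Real.sqrt K := Real.sqrt_pos.2 hKpos
  have hsqK_sq : Real.sqrt K * Real.sqrt K = (K:ℝ) := Real.mul_self_sqrt hKpos.le
  set β : ℝ := 8*α/Real.sqrt K with hβdef0
  have hβpos : 0 < β := by positivity
  have hβdef : Real.sqrt K * β = 8 * α := by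
    rw [hβdef0]
    field_simp
  -- α² * 256K < 1
  have hαK : α^2 * (256*(K:ℝ)) < 1 := by
    rcases hKval with h | ⟨h, _⟩
    · rw [h]
      push_cast
      nlinarith [hα2sq]
    · have hk256 : (256:ℝ)*(K:ℝ) ≤ (k:ℝ) := by
        have : 256 * K ≤ k := by rw [h]; omega
        exact_mod_cast this
      have h2 : α * Real.sqrt k < 1 := by
        have := mul_lt_mul_of_pos_right hα1 hsk
        rwa [one_div, inv_mul_cancel₀ (ne_of_gt hsk)] at this
      have h3 : (α*Real.sqrt k)*(α*Real.sqrt k) < 1 := by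
        nlinarith [h2, mul_pos hα hsk]
      have hαk' : α^2 * (k:ℝ) < 1 := by
        have heq : α^2 * (k:ℝ) = (α*Real.sqrt k)*(α*Real.sqrt k) := by
          linear_combination (-(α^2)) * hsk_sq
        rw [← heq] at h3
        exact h3
      calc α^2 * (256*(K:ℝ)) ≤ α^2 * (k:ℝ) := by nlinarith [sq_nonneg α]
        _ < 1 := hαk'
  have h16 : 16 * α * Real.sqrt K ≤ 1 := by
    nlinarith [hαK, hsqK_sq, hsqK, hα]
  have hβK : β ≤ 1/(2*(K:ℝ)) := by
    rw [hβdef0, div_le_div_iff₀ (by positivity) (by positivity)]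
    nlinarith [h16, hsqK_sq, hsqK]
  have hB := KLB.assouad hK1 h2K est hα hε hβpos hβK hβdef hDP hacc
  -- √K ≤ 32 n ε α
  have hKB : Real.sqrt K ≤ 32 * n * ε * α := by
    nlinarith [hB, hβdef, hsqK, mul_le_mul_of_nonneg_left hB hsqK.le]
  -- √k ≤ 32 √K
  have hk1024 : (k:ℝ) ≤ 1024 * K := by
    rcases hKval with h | ⟨h, h2⟩
    · have : k ≤ 1024 * K := by omega
      exact_mod_cast this
    · have : k ≤ 1024 * K := by rw [h]; omega
      exact_mod_cast this
  have hsqk32 : Real.sqrt k ≤ 32 * Real.sqrt K := by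
    have h1 : Real.sqrt k ≤ Real.sqrt (1024 * K) := Real.sqrt_le_sqrt hk1024
    have h2 : Real.sqrt (1024 * (K:ℝ)) = 32 * Real.sqrt K := by
      rw [show (1024:ℝ) = 32^2 by norm_num, Real.sqrt_mul (by positivity),
        Real.sqrt_sq (by norm_num)]
    linarith [h1, h2 ▸ h1]
  have hnB : Real.sqrt k / (α * ε) ≤ 1024 * n := by
    rw [div_le_iff₀ (by positivity)]
    calc Real.sqrt k ≤ 32 * Real.sqrt K := hsqk32
      _ ≤ 32 * (32 * n * ε * α) := by linarith [hKB]
      _ = 1024 * n * (α * ε) := by ring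
  -- combine
  have hfinal : (1:ℝ)/2048 * (1 / α ^ 2 + Real.sqrt k / (α * ε)) ≤ n := by
    have h1 : 1 / α ^ 2 + Real.sqrt k / (α * ε) ≤ 128 * n + 1024 * n := by
      have := add_le_add hnA' hnB
      linarith
    linarith
  exact hfinal
end

section
/- Sample complexity lower bound for (ε,δ)-DP k-ary distribution estimation under total variation distance: There exists a universal constant c > 0 such that for every even integer k ≥ 2, every α with 0 < α < 1/10, every ε > 0, every δ ≥ 0, and every n: if there exists an (ε,δ)-differentially private Markov kernel θ̂ from ([k])^n to Δ_k such that for every p ∈ Δ_k, E_{X∼p^{⊗n}} E_{Q∼θ̂(X)}[d_TV(Q, p)] ≤ α, then n ≥ c·(k/α² + k/(α·(ε+δ))). -/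
open MeasureTheory ProbabilityTheory ENNReal

set_option maxHeartbeats 1600000

open Finset

set_option maxHeartbeats 1600000





lemma discMeasure_singleton {k : ℕ} (p : Fin k → ℝ) (a : Fin k) :
    discMeasure p {a} = ENNReal.ofReal (p a) := by
  rw [discMeasure]
  rw [show ((∑ i, ENNReal.ofReal (p i) • Measure.dirac i : Measure (Fin k)) {a})
      = ∑ i, (ENNReal.ofReal (p i) • Measure.dirac i : Measure (Fin k)) {a} by
    rw [Measure.coe_finset_sum]; simp]
  simp [Measure.dirac_apply, Set.indicator_apply]

instance {k : ℕ} (p : Fin k → ℝ) : SigmaFinite (discMeasure p) := by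
  have : IsFiniteMeasure (discMeasure p) := by
    constructor
    rw [discMeasure]
    rw [show ((∑ i, ENNReal.ofReal (p i) • Measure.dirac i : Measure (Fin k)) Set.univ)
        = ∑ i, (ENNReal.ofReal (p i) • Measure.dirac i : Measure (Fin k)) Set.univ by
      rw [Measure.coe_finset_sum]; simp]
    simp only [Measure.smul_apply, smul_eq_mul]
    refine lt_of_le_of_lt (Finset.sum_le_sum (fun i _ => ?_))
      ((ENNReal.sum_lt_top).2 (fun i _ => ofReal_lt_top (r := p i)))
    simp [Measure.dirac_apply]
  infer_instance

lemma iid_singleton {k n : ℕ} (p : Fin k → ℝ) (hp : ∀ a, 0 ≤ p a) (x : Fin n → Fin k) :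
    iidSamples n p {x} = ENNReal.ofReal (∏ j, p (x j)) := by
  rw [iidSamples, ← Set.univ_pi_singleton x, Measure.pi_pi]
  rw [ENNReal.ofReal_prod_of_nonneg (fun j _ => hp (x j))]
  exact Finset.prod_congr rfl fun j _ => discMeasure_singleton p (x j)

lemma lintegral_iid {k n : ℕ} (p : Fin k → ℝ) (hp : ∀ a, 0 ≤ p a)
    (f : (Fin n → Fin k) → ℝ≥0∞) :
    ∫⁻ x, f x ∂(iidSamples n p) = ∑ x, ENNReal.ofReal (∏ j, p (x j)) * f x := by
  rw [lintegral_fintype]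
  exact Finset.sum_congr rfl fun x _ => by rw [iid_singleton p hp, mul_comm]



section hamlem
variable {𝒳 : Type*} [DecidableEq 𝒳] {n : ℕ}

lemma ham_eq (x y : Fin n → 𝒳) :
    ham x y = (Finset.univ.filter fun i => x i ≠ y i).card := by
  unfold ham
  congr

lemma ham_comm (x y : Fin n → 𝒳) : ham x y = ham y x := by
  rw [ham_eq, ham_eq]
  congr 1
  exact Finset.filter_congr fun i _ => by simp [ne_comm]

lemma ham_zero {x y : Fin n → 𝒳} (h : ham x y = 0) : x = y := by
  rw [ham_eq, Finset.card_eq_zero, Finset.filter_eq_empty_iff] at h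
  funext i
  have := h (Finset.mem_univ i)
  simpa using this

lemma ham_pos_exists {x y : Fin n → 𝒳} (h : 0 < ham x y) : ∃ i, x i ≠ y i := by
  rw [ham_eq, Finset.card_pos] at h
  obtain ⟨i, hi⟩ := h
  exact ⟨i, (Finset.mem_filter.1 hi).2⟩

lemma ham_update_le_one (x y : Fin n → 𝒳) (i : Fin n) :
    ham x (Function.update x i (y i)) ≤ 1 := by
  rw [ham_eq]
  refine le_trans (Finset.card_le_card fun j hj => ?_) (by simp : ({i} : Finset (Fin n)).card ≤ 1)
  rcases Finset.mem_filter.1 hj with ⟨-, hne⟩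
  rcases eq_or_ne j i with rfl | hji
  · exact Finset.mem_singleton_self j
  · exact absurd (by rw [Function.update_of_ne hji]) hne

lemma ham_update (x y : Fin n → 𝒳) {i : Fin n} (hi : x i ≠ y i) :
    ham (Function.update x i (y i)) y = ham x y - 1 := by
  rw [ham_eq, ham_eq]
  have : (Finset.univ.filter fun j => Function.update x i (y i) j ≠ y j)
      = (Finset.univ.filter fun j => x j ≠ y j).erase i := by
    ext j
    simp only [Finset.mem_filter, Finset.mem_erase, Finset.mem_univ, true_and]
    rcases eq_or_ne j i with rfl | hji
    · simp [Function.update_self]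
    · simp [Function.update_of_ne hji, hji]
  rw [this, Finset.card_erase_of_mem (by simp [hi])]
end hamlem

section groupdp
variable {Θ : Type*} [MeasurableSpace Θ] {n k : ℕ}
  (M : Kernel (Fin n → Fin k) Θ) [IsMarkovKernel M] {ε δ : ℝ}

lemma dp_step (hδ : 0 ≤ δ) (hM : IsDP M ε δ) {x y : Fin n → Fin k}
    (hxy : ham x y ≤ 1) {S : Set Θ} (hS : MeasurableSet S) :
    (M x S).toReal ≤ Real.exp ε * (M y S).toReal + δ := by
  have h := hM x y hxy S hS
  have hfin : ∀ w : Fin n → Fin k, M w S ≠ ⊤ := fun w => measure_ne_top _ _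
  have hrhs : ENNReal.ofReal (Real.exp ε) * M y S + ENNReal.ofReal δ ≠ ⊤ := by
    refine ENNReal.add_ne_top.2 ⟨ENNReal.mul_ne_top ofReal_ne_top (hfin y), ofReal_ne_top⟩
  calc (M x S).toReal ≤ (ENNReal.ofReal (Real.exp ε) * M y S + ENNReal.ofReal δ).toReal :=
        ENNReal.toReal_mono hrhs h
    _ = Real.exp ε * (M y S).toReal + δ := by
        rw [ENNReal.toReal_add (ENNReal.mul_ne_top ofReal_ne_top (hfin y)) ofReal_ne_top,
          ENNReal.toReal_mul, ENNReal.toReal_ofReal (Real.exp_nonneg ε),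
          ENNReal.toReal_ofReal hδ]

lemma dp_group (hε : 0 ≤ ε) (hδ : 0 ≤ δ) (hM : IsDP M ε δ) {S : Set Θ}
    (hS : MeasurableSet S) :
    ∀ (d : ℕ) (x y : Fin n → Fin k), ham x y ≤ d →
      (M x S).toReal ≤ Real.exp (d * ε) * ((M y S).toReal + d * δ) := by
  intro d
  induction d with
  | zero =>
    intro x y h
    have := ham_zero (Nat.le_zero.1 h)
    subst this
    simp
  | succ d ih =>
    intro x y h
    have hy0 : (0:ℝ) ≤ (M y S).toReal := ENNReal.toReal_nonneg
    have hexp : (1:ℝ) ≤ Real.exp (((d+1:ℕ):ℝ) * ε) := by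
      rw [← Real.exp_zero]; exact Real.exp_le_exp.2 (by positivity)
    by_cases hd : ham x y ≤ d
    · refine le_trans (ih x y hd) ?_
      have h1 : Real.exp (d * ε) ≤ Real.exp ((d+1:ℕ) * ε) := by
        apply Real.exp_le_exp.2
        have : (d:ℝ) ≤ (d+1:ℕ) := by push_cast; linarith
        nlinarith
      have h2 : (M y S).toReal + d * δ ≤ (M y S).toReal + (d+1:ℕ) * δ := by
        push_cast; nlinarith
      have h0 : (0:ℝ) ≤ (M y S).toReal + d * δ := by positivity
      calc Real.exp (d * ε) * ((M y S).toReal + d * δ)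
          ≤ Real.exp ((d+1:ℕ) * ε) * ((M y S).toReal + d * δ) := by
            apply mul_le_mul_of_nonneg_right h1 h0
        _ ≤ Real.exp ((d+1:ℕ) * ε) * ((M y S).toReal + (d+1:ℕ) * δ) := by
            apply mul_le_mul_of_nonneg_left h2 (Real.exp_nonneg _)
    · have hpos : 0 < ham x y := by omega
      obtain ⟨i, hi⟩ := ham_pos_exists hpos
      set z := Function.update x i (y i) with hz
      have h1 : ham x z ≤ 1 := ham_update_le_one x y i
      have h2 : ham z y ≤ d := by
        rw [hz, ham_update x y hi]; omega
      have step := dp_step M hδ hM h1 hS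
      have tail := ih z y h2
      have hz0 : (0:ℝ) ≤ (M z S).toReal := ENNReal.toReal_nonneg
      have e1 : Real.exp ε * Real.exp (d * ε) = Real.exp ((d+1:ℕ) * ε) := by
        rw [← Real.exp_add]; congr 1; push_cast; ring
      have hδle : δ ≤ Real.exp (((d+1:ℕ):ℝ)*ε) * δ := by nlinarith [hexp, hδ]
      calc (M x S).toReal ≤ Real.exp ε * (M z S).toReal + δ := step
        _ ≤ Real.exp ε * (Real.exp (d * ε) * ((M y S).toReal + d * δ)) + δ := by
            have := mul_le_mul_of_nonneg_left tail (Real.exp_nonneg ε)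
            linarith
        _ = Real.exp ((d+1:ℕ) * ε) * ((M y S).toReal + d * δ) + δ := by
            rw [← mul_assoc, e1]
        _ ≤ Real.exp ((d+1:ℕ) * ε) * ((M y S).toReal + (d+1:ℕ) * δ) := by
            have : Real.exp ((d+1:ℕ)*ε) * ((M y S).toReal + (d+1:ℕ) * δ)
                = Real.exp ((d+1:ℕ)*ε) * ((M y S).toReal + d * δ) + Real.exp ((d+1:ℕ)*ε) * δ := by
              push_cast; ring
            linarith

lemma dp_group_lower (hε : 0 ≤ ε) (hδ : 0 ≤ δ) (hM : IsDP M ε δ) {S : Set Θ}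
    (hS : MeasurableSet S) (d : ℕ) (x y : Fin n → Fin k) (h : ham x y ≤ d) :
    Real.exp (-(d * ε)) * (M x S).toReal - d * δ ≤ (M y S).toReal := by
  have hg := dp_group M hε hδ hM hS d x y h
  have hex : 0 < Real.exp (-((d:ℝ) * ε)) := Real.exp_pos _
  have h2 := mul_le_mul_of_nonneg_left hg hex.le
  rw [← mul_assoc, ← Real.exp_add] at h2
  simp only [neg_add_cancel, Real.exp_zero, one_mul] at h2
  linarith


section reallem
variable {X : Type*} [Fintype X]

lemma sqrt_finset_prod {ι : Type*} (s : Finset ι) (f : ι → ℝ) (hf : ∀ i ∈ s, 0 ≤ f i) :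
    Real.sqrt (∏ i ∈ s, f i) = ∏ i ∈ s, Real.sqrt (f i) := by
  induction s using Finset.cons_induction with
  | empty => simp
  | cons a s ha ih =>
    rw [Finset.prod_cons, Finset.prod_cons,
      Real.sqrt_mul (hf a (Finset.mem_cons_self a s)), ih (fun i hi => hf i (Finset.mem_cons_of_mem hi))]

lemma lecam_sum (w1 w2 t : X → ℝ) (hs1 : ∑ x, w1 x = 1) (hs2 : ∑ x, w2 x = 1)
    (ht0 : ∀ x, 0 ≤ t x) (ht1 : ∀ x, t x ≤ 1) :
    1 - (∑ x, |w1 x - w2 x|) / 2 ≤ (∑ x, w1 x * (1 - t x)) + ∑ x, w2 x * t x := by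
  have key : ∑ x, (w1 x - w2 x) * t x ≤ (∑ x, |w1 x - w2 x|) / 2 := by
    have h1 : ∀ x, (w1 x - w2 x) * t x ≤ (|w1 x - w2 x| + (w1 x - w2 x)) / 2 := by
      intro x
      rcases abs_cases (w1 x - w2 x) with ⟨h, h'⟩ | ⟨h, h'⟩
      · rw [h]
        have := ht1 x
        nlinarith
      · rw [h]
        have := ht0 x
        nlinarith
    calc ∑ x, (w1 x - w2 x) * t x ≤ ∑ x, (|w1 x - w2 x| + (w1 x - w2 x)) / 2 :=
          Finset.sum_le_sum fun x _ => h1 x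
      _ = (∑ x, |w1 x - w2 x|) / 2 := by
          rw [← Finset.sum_div, Finset.sum_add_distrib]
          have : ∑ x, (w1 x - w2 x) = 0 := by rw [Finset.sum_sub_distrib, hs1, hs2]; ring
          rw [this]; ring
  have expand : (∑ x, w1 x * (1 - t x)) + ∑ x, w2 x * t x
      = 1 - ∑ x, (w1 x - w2 x) * t x := by
    have : ∑ x, w1 x * (1 - t x) = 1 - ∑ x, w1 x * t x := by
      rw [Finset.sum_congr rfl (fun x _ => by ring : ∀ x ∈ univ, w1 x * (1 - t x) = w1 x - w1 x * t x),
        Finset.sum_sub_distrib, hs1]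
    rw [this, Finset.sum_congr rfl (fun x _ => by ring : ∀ x ∈ univ, (w1 x - w2 x) * t x = w1 x * t x - w2 x * t x),
      Finset.sum_sub_distrib]
    ring
  linarith [key, expand.ge]

lemma tv_le_of_bc (u v : X → ℝ) (hu : ∀ x, 0 ≤ u x) (hv : ∀ x, 0 ≤ v x)
    (hsu : ∑ x, u x = 1) (hsv : ∑ x, v x = 1) :
    ∑ x, |u x - v x| ≤ 2 * Real.sqrt (1 - (∑ x, Real.sqrt (u x * v x)) ^ 2) := by
  set B := ∑ x, Real.sqrt (u x * v x) with hB
  have hBsq : ∀ x, Real.sqrt (u x * v x) = Real.sqrt (u x) * Real.sqrt (v x) := fun x =>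
    Real.sqrt_mul (hu x) _
  have hB0 : 0 ≤ B := Finset.sum_nonneg fun x _ => Real.sqrt_nonneg _
  have hsqu : ∀ x, Real.sqrt (u x) ^ 2 = u x := fun x => Real.sq_sqrt (hu x)
  have hsqv : ∀ x, Real.sqrt (v x) ^ 2 = v x := fun x => Real.sq_sqrt (hv x)
  have hB1 : B ^ 2 ≤ 1 := by
    have := Finset.sum_mul_sq_le_sq_mul_sq univ (fun x => Real.sqrt (u x)) (fun x => Real.sqrt (v x))
    rw [Finset.sum_congr rfl fun x _ => hsqu x, Finset.sum_congr rfl fun x _ => hsqv x,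
      hsu, hsv] at this
    calc B ^ 2 = (∑ x, Real.sqrt (u x) * Real.sqrt (v x)) ^ 2 := by
          rw [hB, Finset.sum_congr rfl fun x _ => hBsq x]
      _ ≤ 1 * 1 := this
      _ = 1 := by ring
  have key : (∑ x, |u x - v x|) ^ 2 ≤ 4 * (1 - B ^ 2) := by
    have hpt : ∀ x, |u x - v x| = |Real.sqrt (u x) - Real.sqrt (v x)| * (Real.sqrt (u x) + Real.sqrt (v x)) := by
      intro x
      have : u x - v x = (Real.sqrt (u x) - Real.sqrt (v x)) * (Real.sqrt (u x) + Real.sqrt (v x)) := by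
        have h1 := hsqu x; have h2 := hsqv x; nlinarith
      rw [this, abs_mul, abs_of_nonneg (show (0:ℝ) ≤ Real.sqrt (u x) + Real.sqrt (v x) by positivity)]
    have cs := Finset.sum_mul_sq_le_sq_mul_sq univ
      (fun x => |Real.sqrt (u x) - Real.sqrt (v x)|)
      (fun x => Real.sqrt (u x) + Real.sqrt (v x))
    have e1 : ∑ x, |Real.sqrt (u x) - Real.sqrt (v x)| ^ 2 = 2 - 2 * B := by
      rw [hB, Finset.sum_congr rfl fun x _ => hBsq x]
      have : ∀ x, |Real.sqrt (u x) - Real.sqrt (v x)| ^ 2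
          = u x + v x - 2 * (Real.sqrt (u x) * Real.sqrt (v x)) := by
        intro x
        rw [sq_abs]
        have h1 := hsqu x; have h2 := hsqv x; nlinarith
      rw [Finset.sum_congr rfl fun x _ => this x, Finset.sum_sub_distrib,
        Finset.sum_add_distrib, hsu, hsv, ← Finset.mul_sum]
      ring
    have e2 : ∑ x, (Real.sqrt (u x) + Real.sqrt (v x)) ^ 2 = 2 + 2 * B := by
      rw [hB, Finset.sum_congr rfl fun x _ => hBsq x]
      have : ∀ x, (Real.sqrt (u x) + Real.sqrt (v x)) ^ 2
          = u x + v x + 2 * (Real.sqrt (u x) * Real.sqrt (v x)) := by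
        intro x
        have h1 := hsqu x; have h2 := hsqv x; nlinarith
      rw [Finset.sum_congr rfl fun x _ => this x, Finset.sum_add_distrib,
        Finset.sum_add_distrib, hsu, hsv, ← Finset.mul_sum]
      ring
    rw [e1, e2] at cs
    calc (∑ x, |u x - v x|) ^ 2
        = (∑ x, |Real.sqrt (u x) - Real.sqrt (v x)| * (Real.sqrt (u x) + Real.sqrt (v x))) ^ 2 := by
          rw [Finset.sum_congr rfl fun x _ => hpt x]
      _ ≤ (2 - 2 * B) * (2 + 2 * B) := cs
      _ = 4 * (1 - B ^ 2) := by ring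
  have habs : 0 ≤ ∑ x, |u x - v x| := Finset.sum_nonneg fun x _ => abs_nonneg _
  have h4 : Real.sqrt (4 * (1 - B ^ 2)) = 2 * Real.sqrt (1 - B ^ 2) := by
    rw [Real.sqrt_mul (by norm_num : (0:ℝ) ≤ 4), show (4:ℝ) = 2 ^ 2 by norm_num,
      Real.sqrt_sq (by norm_num : (0:ℝ) ≤ 2)]
  calc ∑ x, |u x - v x| = Real.sqrt ((∑ x, |u x - v x|) ^ 2) := (Real.sqrt_sq habs).symm
    _ ≤ Real.sqrt (4 * (1 - B ^ 2)) := Real.sqrt_le_sqrt key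
    _ = 2 * Real.sqrt (1 - B ^ 2) := h4
end reallem


section prodsum
variable {n : ℕ} {A B : Type*} [Fintype A] [Fintype B]

set_option linter.unusedSectionVars false

/-- sum over function space of a product factorizes -/
lemma sum_prod_single (h : Fin n → A → ℝ) [DecidableEq A] :
    ∑ x : Fin n → A, ∏ j, h j (x j) = ∏ j, ∑ a, h j a := by
  rw [Finset.prod_univ_sum, Fintype.piFinset_univ]

set_option maxHeartbeats 800000 in
/-- double sum over two function spaces of a product factorizes -/
lemma sum_sum_prod (G : Fin n → A → B → ℝ) [DecidableEq A] [DecidableEq B] :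
    ∑ x : Fin n → A, ∑ y : Fin n → B, ∏ j, G j (x j) (y j)
      = ∏ j, ∑ a, ∑ b, G j a b := by
  calc ∑ x : Fin n → A, ∑ y : Fin n → B, ∏ j, G j (x j) (y j)
      = ∑ u : (Fin n → A) × (Fin n → B), ∏ j, G j (u.1 j) (u.2 j) :=
        (Fintype.sum_prod_type (f := fun u : (Fin n → A) × (Fin n → B) => ∏ j, G j (u.1 j) (u.2 j))).symm
    _ = ∑ v : Fin n → A × B, ∏ j, G j (v j).1 (v j).2 := by
        apply Fintype.sum_equiv (Equiv.arrowProdEquivProdArrow (Fin n) (fun _ => A) (fun _ => B)).symm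
        intro u
        exact Finset.prod_congr rfl fun j _ => by
          simp [Equiv.arrowProdEquivProdArrow]
    _ = ∏ j, ∑ c : A × B, G j c.1 c.2 := sum_prod_single (fun j (c : A × B) => G j c.1 c.2)
    _ = ∏ j, ∑ a, ∑ b, G j a b := Finset.prod_congr rfl fun j _ => Fintype.sum_prod_type _
end prodsum

section coupling
variable {K : ℕ}

/-- maximal coupling weight function -/
noncomputable def cw (p q : Fin K → ℝ) (a b : Fin K) : ℝ :=
  (if a = b then min (p a) (q a) else 0)
    + max (p a - q a) 0 * max (q b - p b) 0 / (∑ c, max (p c - q c) 0)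

variable {p q : Fin K → ℝ}

lemma cw_nonneg (hp : ∀ a, 0 ≤ p a) (hq : ∀ a, 0 ≤ q a) (a b : Fin K) : 0 ≤ cw p q a b := by
  unfold cw
  have h1 : 0 ≤ (if a = b then min (p a) (q a) else 0) := by
    split
    · exact le_min (hp a) (hq a)
    · exact le_refl 0
  have h2 : (0:ℝ) ≤ max (p a - q a) 0 * max (q b - p b) 0 / (∑ c, max (p c - q c) 0) := by
    positivity
  linarith

lemma sum_max_eq (hsp : ∑ a, p a = 1) (hsq : ∑ a, q a = 1) :
    ∑ c, max (q c - p c) 0 = ∑ c, max (p c - q c) 0 := by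
  have : ∀ c : Fin K, max (q c - p c) 0 - max (p c - q c) 0 = q c - p c := by
    intro c; rcases le_total (p c) (q c) with h | h
    · rw [max_eq_left (by linarith), max_eq_right (by linarith)]; ring
    · rw [max_eq_right (by linarith), max_eq_left (by linarith)]; ring
  have h := Finset.sum_congr rfl fun c (_ : c ∈ univ) => this c
  rw [Finset.sum_sub_distrib, Finset.sum_sub_distrib, hsp, hsq] at h
  linarith

lemma cw_marginal_fst (hsp : ∑ a, p a = 1) (hsq : ∑ a, q a = 1)
    (hT : 0 < ∑ c, max (p c - q c) 0) (a : Fin K) : ∑ b, cw p q a b = p a := by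
  unfold cw
  rw [Finset.sum_add_distrib]
  have e1 : ∑ b, (if a = b then min (p a) (q a) else 0) = min (p a) (q a) := by
    rw [Finset.sum_ite_eq univ a (fun _ => min (p a) (q a))]
    simp
  have e2 : ∑ b, max (p a - q a) 0 * max (q b - p b) 0 / (∑ c, max (p c - q c) 0)
      = max (p a - q a) 0 := by
    rw [← Finset.sum_div, ← Finset.mul_sum, sum_max_eq hsp hsq,
      mul_div_assoc, div_self hT.ne']
    ring
  rw [e1, e2]
  rcases le_total (p a) (q a) with h | h
  · rw [min_eq_left h, max_eq_right (by linarith)]; ring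
  · rw [min_eq_right h, max_eq_left (by linarith)]; ring

lemma cw_marginal_snd (hsp : ∑ a, p a = 1) (hsq : ∑ a, q a = 1)
    (hT : 0 < ∑ c, max (p c - q c) 0) (b : Fin K) : ∑ a, cw p q a b = q b := by
  unfold cw
  rw [Finset.sum_add_distrib]
  have e1 : ∑ a, (if a = b then min (p a) (q a) else 0) = min (p b) (q b) := by
    rw [Finset.sum_ite_eq' univ b (fun c => min (p c) (q c))]
    simp
  have e2 : ∑ a, max (p a - q a) 0 * max (q b - p b) 0 / (∑ c, max (p c - q c) 0)
      = max (q b - p b) 0 := by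
    rw [← Finset.sum_div, ← Finset.sum_mul,
      mul_comm (∑ a, max (p a - q a) 0) (max (q b - p b) 0),
      mul_div_assoc, div_self hT.ne', mul_one]
  rw [e1, e2]
  rcases le_total (p b) (q b) with h | h
  · rw [min_eq_left h, max_eq_left (by linarith)]; ring
  · rw [min_eq_right h, max_eq_right (by linarith)]; ring

lemma cw_total (hsp : ∑ a, p a = 1) (hsq : ∑ a, q a = 1)
    (hT : 0 < ∑ c, max (p c - q c) 0) : ∑ a, ∑ b, cw p q a b = 1 := by
  rw [Finset.sum_congr rfl fun a _ => cw_marginal_fst hsp hsq hT a, hsp]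

lemma cw_disagree (hsp : ∑ a, p a = 1) (hsq : ∑ a, q a = 1)
    (hT : 0 < ∑ c, max (p c - q c) 0) :
    ∑ a, ∑ b, cw p q a b * (if a = b then (0:ℝ) else 1) = ∑ c, max (p c - q c) 0 := by
  have hpt : ∀ a b : Fin K, cw p q a b * (if a = b then (0:ℝ) else 1)
      = max (p a - q a) 0 * max (q b - p b) 0 / (∑ c, max (p c - q c) 0) := by
    intro a b
    unfold cw
    rcases eq_or_ne a b with rfl | hab
    · simp only [if_pos rfl, mul_zero]
      have : max (p a - q a) 0 * max (q a - p a) 0 = 0 := by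
        rcases le_total (p a) (q a) with h | h
        · rw [max_eq_right (by linarith : p a - q a ≤ 0)]; ring
        · rw [max_eq_right (by linarith : q a - p a ≤ 0)]; ring
      rw [this]; simp
    · rw [if_neg hab, if_neg hab, mul_one, zero_add]
  rw [Finset.sum_congr rfl fun a _ => Finset.sum_congr rfl fun b _ => hpt a b]
  have : ∀ a : Fin K, ∑ b, max (p a - q a) 0 * max (q b - p b) 0 / (∑ c, max (p c - q c) 0)
      = max (p a - q a) 0 := by
    intro a
    rw [← Finset.sum_div, ← Finset.mul_sum, sum_max_eq hsp hsq, mul_div_assoc, div_self hT.ne']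
    ring
  rw [Finset.sum_congr rfl fun a _ => this a]
end coupling


/-- the signed perturbation: `s z i = τ` if `z i` else `-τ` (scaled). -/
noncomputable def sgn (τ : ℝ) {m : ℕ} (z : Fin m → Bool) (i : Fin m) : ℝ :=
  if z i then τ else -τ

/-- hard family of probability vectors on `Fin (m+m)` -/
noncomputable def pv {m : ℕ} (τ : ℝ) (z : Fin m → Bool) : Fin (m + m) → ℝ :=
  Fin.addCases (fun i => (1 + sgn τ z i) / (m + m)) (fun i => (1 - sgn τ z i) / (m + m))

variable {m : ℕ} {τ : ℝ} {z : Fin m → Bool}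

lemma pv_left (i : Fin m) : pv τ z (Fin.castAdd m i) = (1 + sgn τ z i) / (m + m) := by
  rw [pv, Fin.addCases_left]

lemma pv_right (i : Fin m) : pv τ z (Fin.natAdd m i) = (1 - sgn τ z i) / (m + m) := by
  rw [pv, Fin.addCases_right]

lemma abs_sgn (hτ : 0 ≤ τ) (i : Fin m) : |sgn τ z i| ≤ τ := by
  unfold sgn; split <;> simp [abs_of_nonneg, hτ, abs_of_nonpos, neg_nonpos.2 hτ]

lemma pv_nonneg (hm : 1 ≤ m) (hτ0 : 0 ≤ τ) (hτ1 : τ ≤ 1) (j : Fin (m + m)) :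
    0 ≤ pv τ z j := by
  have hd : (0:ℝ) < (m:ℝ) + m := by positivity
  refine Fin.addCases (fun i => ?_) (fun i => ?_) j <;>
    [rw [pv_left]; rw [pv_right]] <;>
  · apply div_nonneg _ hd.le
    have := abs_sgn (z := z) hτ0 i
    have := abs_le.1 this
    linarith [this.1, this.2]

lemma pv_sum (hm : 1 ≤ m) : ∑ j, pv τ z j = 1 := by
  have hd : (0:ℝ) < (m:ℝ) + m := by positivity
  rw [Fin.sum_univ_add]
  simp only [pv_left, pv_right]
  rw [← Finset.sum_add_distrib]
  have : ∀ i : Fin m, (1 + sgn τ z i) / (m + m) + (1 - sgn τ z i) / (m + m) = 2 / (m+m) := by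
    intro i; field_simp; ring
  rw [Finset.sum_congr rfl fun i _ => this i, Finset.sum_const]
  simp only [card_univ, Fintype.card_fin, nsmul_eq_mul]
  field_simp; ring

lemma pv_mem (hm : 1 ≤ m) (hτ0 : 0 ≤ τ) (hτ1 : τ ≤ 1) :
    pv τ z ∈ stdSimplex ℝ (Fin (m + m)) :=
  ⟨fun j => pv_nonneg hm hτ0 hτ1 j, pv_sum hm⟩



/-- decoding set : bit i is declared `true` -/
def Sdec (m : ℕ) (i : Fin m) : Set (simplex (m + m)) :=
  {q | q.1 (Fin.natAdd m i) ≤ q.1 (Fin.castAdd m i)}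

lemma Sdec_meas (m : ℕ) (i : Fin m) : MeasurableSet (Sdec m i) := by
  have h1 : Measurable fun q : simplex (m + m) => q.1 (Fin.natAdd m i) :=
    (measurable_pi_apply _).comp measurable_subtype_coe
  have h2 : Measurable fun q : simplex (m + m) => q.1 (Fin.castAdd m i) :=
    (measurable_pi_apply _).comp measurable_subtype_coe
  exact measurableSet_le h1 h2

/-- the set of estimates decoding bit `i` incorrectly, under truth `z` -/
def wrongSet (m : ℕ) (z : Fin m → Bool) (i : Fin m) : Set (simplex (m + m)) :=
  if z i then (Sdec m i)ᶜ else Sdec m i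

lemma wrongSet_meas (m : ℕ) (z : Fin m → Bool) (i : Fin m) :
    MeasurableSet (wrongSet m z i) := by
  unfold wrongSet; split
  · exact (Sdec_meas m i).compl
  · exact Sdec_meas m i

lemma tv_ge_wrong {m : ℕ} {τ : ℝ} (hm : 1 ≤ m) (hτ : 0 < τ) (z : Fin m → Bool)
    (q : simplex (m + m)) :
    (τ / (m + m)) * ∑ i, (wrongSet m z i).indicator (fun _ => (1:ℝ)) q
      ≤ tvVec q.1 (pv τ z) := by
  have hK : (0:ℝ) < (m:ℝ) + m := by positivity
  have key : ∀ i : Fin m, (2 * τ / (m + m)) * (wrongSet m z i).indicator (fun _ => (1:ℝ)) q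
      ≤ |q.1 (Fin.castAdd m i) - pv τ z (Fin.castAdd m i)|
        + |q.1 (Fin.natAdd m i) - pv τ z (Fin.natAdd m i)| := by
    intro i
    by_cases hq : q ∈ wrongSet m z i
    · rw [Set.indicator_of_mem hq, mul_one]
      have hd : pv τ z (Fin.castAdd m i) - pv τ z (Fin.natAdd m i) = 2 * sgn τ z i / (m + m) := by
        rw [pv_left, pv_right]; field_simp; ring
      have a1 := le_abs_self (q.1 (Fin.castAdd m i) - pv τ z (Fin.castAdd m i))
      have a2 := neg_abs_le (q.1 (Fin.castAdd m i) - pv τ z (Fin.castAdd m i))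
      have b1 := le_abs_self (q.1 (Fin.natAdd m i) - pv τ z (Fin.natAdd m i))
      have b2 := neg_abs_le (q.1 (Fin.natAdd m i) - pv τ z (Fin.natAdd m i))
      unfold wrongSet at hq
      by_cases hz : z i
      · rw [if_pos hz] at hq
        have hlt : q.1 (Fin.castAdd m i) < q.1 (Fin.natAdd m i) := by
          have := hq
          simp only [Set.mem_compl_iff, Sdec, Set.mem_setOf_eq, not_le] at this
          exact this
        have hsgn : sgn τ z i = τ := by unfold sgn; rw [if_pos hz]
        rw [hsgn] at hd
        linarith
      · rw [if_neg hz] at hq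
        have hle : q.1 (Fin.natAdd m i) ≤ q.1 (Fin.castAdd m i) := hq
        have hsgn : sgn τ z i = -τ := by unfold sgn; rw [if_neg hz]
        rw [hsgn] at hd
        rw [show 2 * -τ / ((m:ℝ) + m) = -(2 * τ / (m + m)) by ring] at hd
        linarith
    · rw [Set.indicator_of_notMem hq, mul_zero]
      positivity
  have hsum : (2 * τ / (m + m)) * ∑ i, (wrongSet m z i).indicator (fun _ => (1:ℝ)) q
      ≤ ∑ j, |q.1 j - pv τ z j| := by
    rw [Fin.sum_univ_add (f := fun j => |q.1 j - pv τ z j|), Finset.mul_sum]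
    rw [← Finset.sum_add_distrib]
    exact Finset.sum_le_sum fun i _ => key i
  rw [tvVec]
  rw [Finset.mul_sum] at hsum ⊢
  have : ∀ i ∈ univ, τ / ((m:ℝ) + m) * (wrongSet m z i).indicator (fun _ => (1:ℝ)) q
      = (2 * τ / ((m:ℝ) + m) * (wrongSet m z i).indicator (fun _ => (1:ℝ)) q) / 2 := by
    intro i _; ring
  rw [Finset.sum_congr rfl this, ← Finset.sum_div]
  linarith
section master
variable {m n : ℕ}

noncomputable def wvec {m n : ℕ} (τ : ℝ) (z : Fin m → Bool) (x : Fin n → Fin (m + m)) : ℝ :=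
  ∏ j, pv τ z (x j)

lemma wvec_nonneg {τ : ℝ} (hm : 1 ≤ m) (hτ0 : 0 ≤ τ) (hτ1 : τ ≤ 1) (z : Fin m → Bool)
    (x : Fin n → Fin (m + m)) : 0 ≤ wvec τ z x :=
  Finset.prod_nonneg fun j _ => pv_nonneg hm hτ0 hτ1 _

lemma wvec_sum {τ : ℝ} (hm : 1 ≤ m) (z : Fin m → Bool) :
    ∑ x : Fin n → Fin (m + m), wvec τ z x = 1 := by
  unfold wvec
  rw [sum_prod_single (fun _ a => pv τ z a)]
  rw [Finset.prod_congr rfl fun j _ => pv_sum hm (τ := τ) (z := z)]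
  simp

variable (est : Kernel (Fin n → Fin (m + m)) (simplex (m + m))) [IsMarkovKernel est]

lemma inner_ge {τ : ℝ} (hm : 1 ≤ m) (hτ : 0 < τ) (z : Fin m → Bool)
    (x : Fin n → Fin (m + m)) :
    ENNReal.ofReal (τ / (m + m)) * ∑ i, est x (wrongSet m z i)
      ≤ ∫⁻ q, ENNReal.ofReal (tvVec q.1 (pv τ z)) ∂(est x) := by
  have hK : (0:ℝ) < (m:ℝ) + m := by positivity
  have hc : (0:ℝ) ≤ τ / (m + m) := by positivity
  have e1 : ∀ i : Fin m, ENNReal.ofReal (τ / (m + m)) * est x (wrongSet m z i)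
      = ∫⁻ q, (wrongSet m z i).indicator (fun _ => ENNReal.ofReal (τ / (m + m))) q ∂(est x) := by
    intro i
    rw [lintegral_indicator_const (wrongSet_meas m z i)]
  rw [Finset.mul_sum, Finset.sum_congr rfl fun i _ => e1 i,
    ← lintegral_finset_sum _ (fun i _ => measurable_const.indicator (wrongSet_meas m z i))]
  apply lintegral_mono
  intro q
  dsimp only
  have e2 : ∀ i : Fin m, (wrongSet m z i).indicator
        (fun _ => ENNReal.ofReal (τ / (m + m))) q
      = ENNReal.ofReal ((τ / (m + m)) * (wrongSet m z i).indicator (fun _ => (1:ℝ)) q) := by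
    intro i
    by_cases hq : q ∈ wrongSet m z i
    · rw [Set.indicator_of_mem hq, Set.indicator_of_mem hq, mul_one]
    · rw [Set.indicator_of_notMem hq, Set.indicator_of_notMem hq, mul_zero, ENNReal.ofReal_zero]
  rw [Finset.sum_congr rfl fun i _ => e2 i,
    ← ENNReal.ofReal_sum_of_nonneg (fun i _ => mul_nonneg hc (Set.indicator_nonneg (fun _ _ => zero_le_one) q)), ← Finset.mul_sum]
  exact ENNReal.ofReal_le_ofReal (tv_ge_wrong hm hτ z q)

lemma master {τ α : ℝ} (hm : 1 ≤ m) (hτ : 0 < τ) (hτ1 : τ ≤ 1) (hα : 0 ≤ α)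
    (z : Fin m → Bool)
    (hyp : ∫⁻ x, ∫⁻ q, ENNReal.ofReal (tvVec q.1 (pv τ z)) ∂(est x)
        ∂(iidSamples n (pv τ z)) ≤ ENNReal.ofReal α) :
    (τ / (m + m)) * ∑ i, ∑ x, wvec τ z x * (est x (wrongSet m z i)).toReal ≤ α := by
  have hK : (0:ℝ) < (m:ℝ) + m := by positivity
  have hc : (0:ℝ) ≤ τ / (m + m) := by positivity
  have hle : ∑ x, ENNReal.ofReal (wvec τ z x)
        * (ENNReal.ofReal (τ / (m + m)) * ∑ i, est x (wrongSet m z i))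
      ≤ ENNReal.ofReal α := by
    refine le_trans ?_ hyp
    rw [lintegral_iid (pv τ z) (fun a => pv_nonneg hm hτ.le hτ1 a)]
    refine Finset.sum_le_sum fun x _ => ?_
    exact mul_le_mul_right (inner_ge est hm hτ z x) _
  have hfin : ∀ x : Fin n → Fin (m + m), ENNReal.ofReal (wvec τ z x)
      * (ENNReal.ofReal (τ / (m + m)) * ∑ i, est x (wrongSet m z i)) ≠ ⊤ := by
    intro x
    refine ENNReal.mul_ne_top ENNReal.ofReal_ne_top
      (ENNReal.mul_ne_top ENNReal.ofReal_ne_top ?_)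
    exact (ENNReal.sum_lt_top.2 fun i _ => (measure_lt_top _ _)).ne
  have h2 := ENNReal.toReal_mono ENNReal.ofReal_ne_top hle
  rw [ENNReal.toReal_ofReal hα, ENNReal.toReal_sum (fun x _ => hfin x)] at h2
  have e3 : ∀ x : Fin n → Fin (m + m),
      (ENNReal.ofReal (wvec τ z x)
        * (ENNReal.ofReal (τ / (m + m)) * ∑ i, est x (wrongSet m z i))).toReal
      = wvec τ z x * ((τ / (m + m)) * ∑ i, (est x (wrongSet m z i)).toReal) := by
    intro x
    rw [ENNReal.toReal_mul, ENNReal.toReal_mul,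
      ENNReal.toReal_ofReal (wvec_nonneg hm hτ.le hτ1 z x), ENNReal.toReal_ofReal hc,
      ENNReal.toReal_sum (fun i _ => measure_ne_top _ _)]
  rw [Finset.sum_congr rfl fun x _ => e3 x] at h2
  have e4 : ∑ x, wvec τ z x * ((τ / (m + m)) * ∑ i, (est x (wrongSet m z i)).toReal)
      = (τ / (m + m)) * ∑ i, ∑ x, wvec τ z x * (est x (wrongSet m z i)).toReal := by
    calc ∑ x, wvec τ z x * ((τ / (m + m)) * ∑ i, (est x (wrongSet m z i)).toReal)
        = ∑ x, ∑ i, (τ / ((m:ℝ) + m)) * (wvec τ z x * (est x (wrongSet m z i)).toReal) := by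
          refine Finset.sum_congr rfl fun x _ => ?_
          rw [Finset.mul_sum, Finset.mul_sum]
          exact Finset.sum_congr rfl fun i _ => by ring
      _ = ∑ i, ∑ x, (τ / ((m:ℝ) + m)) * (wvec τ z x * (est x (wrongSet m z i)).toReal) :=
          Finset.sum_comm
      _ = (τ / (m + m)) * ∑ i, ∑ x, wvec τ z x * (est x (wrongSet m z i)).toReal := by
        rw [Finset.mul_sum]
        exact Finset.sum_congr rfl fun i _ => (Finset.mul_sum _ _ _).symm
  rw [e4] at h2
  exact h2
end master
section dptransfer
open Finset Real
variable {K n : ℕ} {Θ : Type*} [MeasurableSpace Θ]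

/-- real-valued Hamming distance as a sum of indicators -/
lemma ham_real {x y : Fin n → Fin K} :
    (ham x y : ℝ) = ∑ j, (if x j = y j then (0:ℝ) else 1) := by
  rw [ham_eq, Finset.card_filter]
  push_cast
  refine Finset.sum_congr rfl fun j _ => ?_
  by_cases h : x j = y j <;> simp [h]

lemma dp_transfer {p q : Fin K → ℝ}
    (hp : ∀ a, 0 ≤ p a) (hq : ∀ a, 0 ≤ q a)
    (hsp : ∑ a, p a = 1) (hsq : ∑ a, q a = 1)
    (hT : 0 < ∑ c, max (p c - q c) 0)
    (M : Kernel (Fin n → Fin K) Θ) [IsMarkovKernel M] {ε δ : ℝ}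
    (hε : 0 ≤ ε) (hδ : 0 ≤ δ) (hM : IsDP M ε δ)
    {S : Set Θ} (hS : MeasurableSet S) {d₀ : ℕ} (hd₀ : 0 < d₀) :
    Real.exp (-(d₀ * ε)) * ((∑ x, (∏ j, p (x j)) * (M x S).toReal)
        - n * (∑ c, max (p c - q c) 0) / d₀) - d₀ * δ
      ≤ ∑ y, (∏ j, q (y j)) * (M y S).toReal := by
  classical
  set T := ∑ c, max (p c - q c) 0 with hTdef
  set Ω : (Fin n → Fin K) → (Fin n → Fin K) → ℝ := fun x y => ∏ j, cw p q (x j) (y j)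
    with hΩ
  set s : (Fin n → Fin K) → ℝ := fun x => (M x S).toReal with hs
  have hs0 : ∀ x, 0 ≤ s x := fun x => ENNReal.toReal_nonneg
  have hs1 : ∀ x, s x ≤ 1 := by
    intro x
    have : M x S ≤ 1 := prob_le_one
    calc s x ≤ (1 : ℝ≥0∞).toReal := ENNReal.toReal_mono (by simp) this
      _ = 1 := by simp
  have hΩ0 : ∀ x y, 0 ≤ Ω x y := fun x y =>
    Finset.prod_nonneg fun j _ => cw_nonneg hp hq _ _
  have marg1 : ∀ x, ∑ y, Ω x y = ∏ j, p (x j) := by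
    intro x
    rw [hΩ]
    rw [sum_prod_single (fun j b => cw p q (x j) b)]
    exact Finset.prod_congr rfl fun j _ => cw_marginal_fst hsp hsq hT (x j)
  have marg2 : ∀ y, ∑ x, Ω x y = ∏ j, q (y j) := by
    intro y
    rw [hΩ]
    have := sum_prod_single (fun j a => cw p q a (y j))
    rw [this]
    exact Finset.prod_congr rfl fun j _ => cw_marginal_snd hsp hsq hT (y j)
  -- expected hamming distance
  set G : Fin n → Fin n → Fin K → Fin K → ℝ :=
    fun j₀ j a b => if j = j₀ then cw p q a b * (if a = b then (0:ℝ) else 1) else cw p q a b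
    with hG
  have hexp : ∑ x, ∑ y, Ω x y * (ham x y : ℝ) = n * T := by
    have e1 : ∀ x y : Fin n → Fin K, Ω x y * (ham x y : ℝ)
        = ∑ j₀, ∏ j, G j₀ j (x j) (y j) := by
      intro x y
      rw [ham_real, Finset.mul_sum]
      refine Finset.sum_congr rfl fun j₀ _ => ?_
      have hGs : ∏ j, G j₀ j (x j) (y j)
          = (cw p q (x j₀) (y j₀) * (if x j₀ = y j₀ then (0:ℝ) else 1))
            * ∏ j ∈ univ.erase j₀, cw p q (x j) (y j) := by
        rw [← Finset.mul_prod_erase univ (fun j => G j₀ j (x j) (y j)) (mem_univ j₀)]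
        rw [hG]
        simp only [if_pos rfl]
        congr 1
        refine Finset.prod_congr rfl fun j hj => ?_
        rw [if_neg (Finset.mem_erase.1 hj).1]
      rw [hGs]
      have hΩxy : Ω x y = cw p q (x j₀) (y j₀) * ∏ j ∈ univ.erase j₀, cw p q (x j) (y j) := by
        rw [hΩ]
        dsimp only
        exact (Finset.mul_prod_erase univ (fun j => cw p q (x j) (y j)) (mem_univ j₀)).symm
      rw [hΩxy]
      ring
    have per : ∀ j₀ : Fin n, ∑ x : Fin n → Fin K, ∑ y : Fin n → Fin K,
        ∏ j, G j₀ j (x j) (y j) = T := by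
      intro j₀
      rw [sum_sum_prod (G j₀), Finset.prod_eq_single j₀ ?h1 ?h2]
      · rw [hG]
        simp only [if_pos rfl]
        exact cw_disagree hsp hsq hT
      case h1 =>
        intro j _ hj
        rw [hG]
        simp only [if_neg hj]
        exact cw_total hsp hsq hT
      case h2 => intro h; exact absurd (mem_univ j₀) h
    calc ∑ x, ∑ y, Ω x y * (ham x y : ℝ)
        = ∑ x : Fin n → Fin K, ∑ y : Fin n → Fin K, ∑ j₀, ∏ j, G j₀ j (x j) (y j) :=
          Finset.sum_congr rfl fun x _ => Finset.sum_congr rfl fun y _ => e1 x y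
      _ = ∑ x : Fin n → Fin K, ∑ j₀, ∑ y : Fin n → Fin K, ∏ j, G j₀ j (x j) (y j) :=
          Finset.sum_congr rfl fun x _ => Finset.sum_comm
      _ = ∑ j₀, ∑ x : Fin n → Fin K, ∑ y : Fin n → Fin K, ∏ j, G j₀ j (x j) (y j) :=
          Finset.sum_comm
      _ = ∑ _j₀ : Fin n, T := Finset.sum_congr rfl fun j₀ _ => per j₀
      _ = n * T := by rw [Finset.sum_const, card_univ, Fintype.card_fin, nsmul_eq_mul]
  -- total mass one
  have htot : ∑ x, ∑ y, Ω x y = 1 := by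
    rw [Finset.sum_congr rfl fun x _ => marg1 x, sum_prod_single (fun _ a => p a)]
    rw [Finset.prod_congr rfl fun j _ => hsp]
    simp
  set I : (Fin n → Fin K) → (Fin n → Fin K) → ℝ :=
    fun x y => if ham x y ≤ d₀ then 1 else 0 with hI
  have hI0 : ∀ x y, 0 ≤ I x y := by intro x y; rw [hI]; dsimp only; split <;> norm_num
  have hI1 : ∀ x y, I x y ≤ 1 := by intro x y; rw [hI]; dsimp only; split <;> norm_num
  have claim1 : ∑ x, ∑ y, Ω x y * (I x y * (Real.exp (-(d₀ * ε)) * s x - d₀ * δ))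
      ≤ ∑ y, (∏ j, q (y j)) * s y := by
    have e0 : ∑ y, (∏ j, q (y j)) * s y = ∑ x, ∑ y, Ω x y * s y := by
      rw [Finset.sum_comm (f := fun x y => Ω x y * s y)]
      refine Finset.sum_congr rfl fun y _ => ?_
      rw [← marg2 y, Finset.sum_mul]
    rw [e0]
    refine Finset.sum_le_sum fun x _ => Finset.sum_le_sum fun y _ => ?_
    rw [hI]; dsimp only
    by_cases hham : ham x y ≤ d₀
    · rw [if_pos hham, one_mul]
      refine mul_le_mul_of_nonneg_left ?_ (hΩ0 x y)
      have := dp_group_lower M hε hδ hM hS d₀ x y hham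
      exact this
    · rw [if_neg hham, zero_mul, mul_zero]
      exact mul_nonneg (hΩ0 x y) (hs0 y)
  have claim2 : ∑ x, ∑ y, Ω x y * (I x y * (Real.exp (-(d₀ * ε)) * s x - d₀ * δ))
      = Real.exp (-(d₀ * ε)) * (∑ x, ∑ y, Ω x y * I x y * s x)
        - d₀ * δ * (∑ x, ∑ y, Ω x y * I x y) := by
    rw [Finset.mul_sum, Finset.mul_sum, ← Finset.sum_sub_distrib]
    refine Finset.sum_congr rfl fun x _ => ?_
    rw [Finset.mul_sum, Finset.mul_sum, ← Finset.sum_sub_distrib]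
    refine Finset.sum_congr rfl fun y _ => ?_
    ring
  have claim3 : ∑ x, ∑ y, Ω x y * I x y ≤ 1 := by
    rw [← htot]
    refine Finset.sum_le_sum fun x _ => Finset.sum_le_sum fun y _ => ?_
    calc Ω x y * I x y ≤ Ω x y * 1 := mul_le_mul_of_nonneg_left (hI1 x y) (hΩ0 x y)
      _ = Ω x y := mul_one _
  have claim4 : (∑ x, (∏ j, p (x j)) * s x) - n * T / d₀ ≤ ∑ x, ∑ y, Ω x y * I x y * s x := by
    have e1 : ∑ x, (∏ j, p (x j)) * s x = ∑ x, ∑ y, Ω x y * s x := by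
      refine Finset.sum_congr rfl fun x _ => ?_
      rw [← marg1 x, Finset.sum_mul]
    have e2 : ∑ x, ∑ y, Ω x y * s x - ∑ x, ∑ y, Ω x y * I x y * s x
        = ∑ x, ∑ y, Ω x y * (1 - I x y) * s x := by
      rw [← Finset.sum_sub_distrib]
      refine Finset.sum_congr rfl fun x _ => ?_
      rw [← Finset.sum_sub_distrib]
      refine Finset.sum_congr rfl fun y _ => ?_
      ring
    have e3 : ∑ x, ∑ y, Ω x y * (1 - I x y) * s x ≤ n * T / d₀ := by
      have step : ∀ x y : Fin n → Fin K, Ω x y * (1 - I x y) * s x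
          ≤ Ω x y * (ham x y : ℝ) / d₀ := by
        intro x y
        have hd₀R : (0:ℝ) < d₀ := by positivity
        rw [hI]; dsimp only
        by_cases hham : ham x y ≤ d₀
        · rw [if_pos hham]
          simp only [sub_self, mul_zero, zero_mul]
          exact div_nonneg (mul_nonneg (hΩ0 x y) (Nat.cast_nonneg _)) (Nat.cast_nonneg _)
        · rw [if_neg hham]
          have h1 : (d₀ : ℝ) ≤ (ham x y : ℝ) := by
            have : d₀ ≤ ham x y := le_of_not_ge hham
            exact_mod_cast this
          have h2 : Ω x y * (1 - 0) * s x ≤ Ω x y := by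
            rw [sub_zero, mul_one]
            calc Ω x y * s x ≤ Ω x y * 1 := mul_le_mul_of_nonneg_left (hs1 x) (hΩ0 x y)
              _ = Ω x y := mul_one _
          calc Ω x y * (1 - 0) * s x ≤ Ω x y := h2
            _ ≤ Ω x y * (ham x y : ℝ) / d₀ := by
              rw [mul_div_assoc]
              nth_rewrite 1 [← mul_one (Ω x y)]
              refine mul_le_mul_of_nonneg_left ?_ (hΩ0 x y)
              rw [le_div_iff₀ hd₀R, one_mul]
              exact h1
      calc ∑ x, ∑ y, Ω x y * (1 - I x y) * s x
          ≤ ∑ x, ∑ y, Ω x y * (ham x y : ℝ) / d₀ :=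
            Finset.sum_le_sum fun x _ => Finset.sum_le_sum fun y _ => step x y
        _ = (∑ x, ∑ y, Ω x y * (ham x y : ℝ)) / d₀ := by
            rw [Finset.sum_div]
            exact Finset.sum_congr rfl fun x _ => by rw [Finset.sum_div]
        _ = n * T / d₀ := by rw [hexp]
    rw [e1]
    linarith [e2, e3]
  -- assemble
  have hexp0 : 0 < Real.exp (-(d₀ * ε)) := Real.exp_pos _
  have hfinal : Real.exp (-(d₀ * ε)) * ((∑ x, (∏ j, p (x j)) * s x) - n * T / d₀) - d₀ * δ
      ≤ ∑ x, ∑ y, Ω x y * (I x y * (Real.exp (-(d₀ * ε)) * s x - d₀ * δ)) := by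
    rw [claim2]
    have h1 : Real.exp (-(d₀ * ε)) * ((∑ x, (∏ j, p (x j)) * s x) - n * T / d₀)
        ≤ Real.exp (-(d₀ * ε)) * (∑ x, ∑ y, Ω x y * I x y * s x) :=
      mul_le_mul_of_nonneg_left claim4 hexp0.le
    have h2 : d₀ * δ * (∑ x, ∑ y, Ω x y * I x y) ≤ d₀ * δ * 1 :=
      mul_le_mul_of_nonneg_left claim3 (by positivity)
    linarith
  exact le_trans hfinal claim1
end dptransfer
section pairlem
open Finset
variable {m : ℕ} {τ : ℝ}

lemma sgn_update (z : Fin m → Bool) (i₀ i : Fin m) :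
    sgn τ (Function.update z i₀ false) i = if i = i₀ then -τ else sgn τ z i := by
  rcases eq_or_ne i i₀ with rfl | hne
  · simp [sgn, Function.update_self]
  · simp [sgn, Function.update_of_ne hne, hne]

lemma sgn_abs_le (hτ : 0 ≤ τ) (z : Fin m → Bool) (i : Fin m) : |sgn τ z i| ≤ τ := by
  unfold sgn; split
  · rw [abs_of_nonneg hτ]
  · rw [abs_of_nonpos (by linarith)]; linarith

lemma T_eq (hm : 1 ≤ m) (hτ : 0 < τ) (z : Fin m → Bool) (i₀ : Fin m) (hz : z i₀ = true) :
    ∑ c, max (pv τ z c - pv τ (Function.update z i₀ false) c) 0 = 2 * τ / (m + m) := by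
  have hK : (0:ℝ) < (m:ℝ) + m := by positivity
  rw [Fin.sum_univ_add (f := fun c => max (pv τ z c - pv τ (Function.update z i₀ false) c) 0)]
  have hL : ∀ i : Fin m,
      max (pv τ z (Fin.castAdd m i) - pv τ (Function.update z i₀ false) (Fin.castAdd m i)) 0
      = if i = i₀ then 2 * τ / (m + m) else 0 := by
    intro i
    rw [pv_left, pv_left, sgn_update]
    rcases eq_or_ne i i₀ with rfl | hne
    · rw [if_pos rfl, if_pos rfl]
      have hsgn : sgn τ z i = τ := by simp [sgn, hz]
      rw [hsgn]
      have harg : (1 + τ) / ((m:ℝ) + m) - (1 + -τ) / ((m:ℝ) + m) = 2 * τ / ((m:ℝ) + m) := by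
        field_simp; ring
      rw [harg, max_eq_left (by positivity)]
    · rw [if_neg hne, if_neg hne]
      simp
  have hR : ∀ i : Fin m,
      max (pv τ z (Fin.natAdd m i) - pv τ (Function.update z i₀ false) (Fin.natAdd m i)) 0
      = 0 := by
    intro i
    rw [pv_right, pv_right, sgn_update]
    rcases eq_or_ne i i₀ with rfl | hne
    · rw [if_pos rfl]
      have hsgn : sgn τ z i = τ := by simp [sgn, hz]
      rw [hsgn]
      have harg : (1 - τ) / ((m:ℝ) + m) - (1 - -τ) / ((m:ℝ) + m) = -(2 * τ / ((m:ℝ) + m)) := by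
        field_simp; ring
      rw [harg, max_eq_right (neg_nonpos.2 (by positivity))]
    · rw [if_neg hne]
      simp
  rw [Finset.sum_congr rfl fun i _ => hL i, Finset.sum_congr rfl fun i _ => hR i]
  rw [Finset.sum_ite_eq' univ i₀ (fun _ => 2 * τ / ((m:ℝ) + m))]
  simp

lemma bc_bound (hm : 1 ≤ m) (hτ : 0 < τ) (hτ1 : τ ≤ 1) (z : Fin m → Bool) (i₀ : Fin m)
    (hz : z i₀ = true) :
    1 - 2 * τ ^ 2 / (m + m)
      ≤ ∑ a, Real.sqrt (pv τ z a * pv τ (Function.update z i₀ false) a) := by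
  have hK : (0:ℝ) < (m:ℝ) + m := by positivity
  have hsqEq : ∀ (s : ℝ), |s| ≤ τ →
      Real.sqrt ((1 + s) / ((m:ℝ) + m) * ((1 + s) / ((m:ℝ) + m))) = (1 + s) / ((m:ℝ) + m) := by
    intro s hs
    have h1 : 0 ≤ (1 + s) / ((m:ℝ) + m) := by
      have := abs_le.1 hs
      apply div_nonneg _ hK.le
      linarith [this.1]
    rw [← pow_two, Real.sqrt_sq h1]
  have key : ∑ a, Real.sqrt (pv τ z a * pv τ (Function.update z i₀ false) a)
      = ∑ i : Fin m, ((if i = i₀ then 2 * Real.sqrt (1 - τ ^ 2) / ((m:ℝ) + m)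
          else 2 / ((m:ℝ) + m))) := by
    rw [Fin.sum_univ_add (f := fun a => Real.sqrt (pv τ z a * pv τ (Function.update z i₀ false) a)),
      ← Finset.sum_add_distrib]
    refine Finset.sum_congr rfl fun i _ => ?_
    rw [pv_left, pv_left, pv_right, pv_right, sgn_update]
    rcases eq_or_ne i i₀ with rfl | hne
    · rw [if_pos rfl, if_pos rfl]
      have hsgn : sgn τ z i = τ := by simp [sgn, hz]
      rw [hsgn]
      have e1 : (1 + τ) / ((m:ℝ) + m) * ((1 + -τ) / ((m:ℝ) + m))
          = (1 - τ ^ 2) / ((m:ℝ) + m) ^ 2 := by field_simp; ring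
      have e2 : (1 - τ) / ((m:ℝ) + m) * ((1 - -τ) / ((m:ℝ) + m))
          = (1 - τ ^ 2) / ((m:ℝ) + m) ^ 2 := by field_simp; ring
      rw [e1, e2, Real.sqrt_div (by nlinarith), Real.sqrt_sq hK.le]
      ring
    · simp only [if_neg hne]
      have habs := sgn_abs_le (z := z) hτ.le i
      have h1 := hsqEq (sgn τ z i) habs
      have h2 : Real.sqrt ((1 - sgn τ z i) / ((m:ℝ) + m) * ((1 - sgn τ z i) / ((m:ℝ) + m)))
          = (1 - sgn τ z i) / ((m:ℝ) + m) := by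
        have habs' : |(- sgn τ z i)| ≤ τ := by rwa [abs_neg]
        have := hsqEq (- sgn τ z i) habs'
        rw [show (1 + -sgn τ z i) = 1 - sgn τ z i by ring] at this
        exact this
      rw [h1, h2]
      field_simp
      norm_num
  rw [key]
  have expand : ∑ i : Fin m, ((if i = i₀ then 2 * Real.sqrt (1 - τ ^ 2) / ((m:ℝ) + m)
        else 2 / ((m:ℝ) + m)))
      = (m : ℝ) * (2 / ((m:ℝ) + m))
        + (2 * Real.sqrt (1 - τ ^ 2) / ((m:ℝ) + m) - 2 / ((m:ℝ) + m)) := by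
    have : ∀ i : Fin m, ((if i = i₀ then 2 * Real.sqrt (1 - τ ^ 2) / ((m:ℝ) + m)
          else 2 / ((m:ℝ) + m)))
        = 2 / ((m:ℝ) + m) + (if i = i₀ then 2 * Real.sqrt (1 - τ ^ 2) / ((m:ℝ) + m)
            - 2 / ((m:ℝ) + m) else 0) := by
      intro i; split <;> ring
    rw [Finset.sum_congr rfl fun i _ => this i, Finset.sum_add_distrib,
      Finset.sum_ite_eq' univ i₀ (fun _ => 2 * Real.sqrt (1 - τ ^ 2) / ((m:ℝ) + m) - 2 / ((m:ℝ) + m)),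
      Finset.sum_const, card_univ, Fintype.card_fin, nsmul_eq_mul]
    simp
  rw [expand]
  have hsqrt : 1 - τ ^ 2 ≤ Real.sqrt (1 - τ ^ 2) := by
    have hx0 : (0:ℝ) ≤ 1 - τ ^ 2 := by nlinarith
    have hx1 : 1 - τ ^ 2 ≤ 1 := by nlinarith
    rw [Real.le_sqrt hx0 hx0]
    nlinarith [mul_nonneg hx0 (sub_nonneg.2 hx1)]
  have hmK : (m : ℝ) * (2 / ((m:ℝ) + m)) = 1 := by
    field_simp
    ring
  rw [hmK]
  have h3 : 2 * (1 - τ ^ 2) / ((m:ℝ) + m) ≤ 2 * Real.sqrt (1 - τ ^ 2) / ((m:ℝ) + m) := by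
    apply (div_le_div_iff_of_pos_right hK).2
    linarith
  have h4 : 1 - 2 * τ ^ 2 / ((m:ℝ) + m)
      = 1 + (2 * (1 - τ ^ 2) / ((m:ℝ) + m) - 2 / ((m:ℝ) + m)) := by
    field_simp
    ring
  linarith
end pairlem

lemma exists_good_pair {m : ℕ} (hm : 1 ≤ m) (f : (Fin m → Bool) → Fin m → ℝ) (b : ℝ)
    (hz : ∀ z, ∑ i, f z i ≤ m * b) :
    ∃ (i : Fin m) (z : Fin m → Bool), z i = true
      ∧ f z i + f (Function.update z i false) i ≤ 2 * b := by
  by_contra hcon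
  push_neg at hcon
  have key : ∀ i : Fin m, ∑ z : Fin m → Bool, f z i
      > (univ.filter fun z : Fin m → Bool => z i = true).card * (2 * b) := by
    intro i
    have split : ∑ z : Fin m → Bool, f z i
        = ∑ z ∈ univ.filter (fun z : Fin m → Bool => z i = true), f z i
          + ∑ z ∈ univ.filter (fun z : Fin m → Bool => ¬ z i = true), f z i :=
      (Finset.sum_filter_add_sum_filter_not univ _ _).symm
    have reflect : ∑ z ∈ univ.filter (fun z : Fin m → Bool => ¬ z i = true), f z i
        = ∑ z ∈ univ.filter (fun z : Fin m → Bool => z i = true),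
            f (Function.update z i false) i := by
      refine Finset.sum_nbij' (fun z => Function.update z i true)
        (fun z => Function.update z i false) ?_ ?_ ?_ ?_ ?_
      · intro z hzz
        simp only [mem_filter, mem_univ, true_and] at hzz ⊢
        simp [Function.update_self]
      · intro z hzz
        simp only [mem_filter, mem_univ, true_and] at hzz ⊢
        simp [Function.update_self]
      · intro z hzz
        simp only [mem_filter, mem_univ, true_and] at hzz
        funext j
        rcases eq_or_ne j i with rfl | hji
        · simp [Function.update_self]
          simpa using hzz
        · simp [Function.update_of_ne hji]
      · intro z hzz
        simp only [mem_filter, mem_univ, true_and] at hzz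
        funext j
        rcases eq_or_ne j i with rfl | hji
        · simp [Function.update_self, hzz]
        · simp [Function.update_of_ne hji]
      · intro z hzz
        simp only [mem_filter, mem_univ, true_and] at hzz
        congr 2
        funext j
        rcases eq_or_ne j i with rfl | hji
        · simp [Function.update_self]
          simpa using hzz
        · simp [Function.update_of_ne hji]
    have hne : (univ.filter fun z : Fin m → Bool => z i = true).Nonempty := by
      refine ⟨fun _ => true, ?_⟩
      simp
    have hlt : ∑ z ∈ univ.filter (fun z : Fin m → Bool => z i = true),
          (f z i + f (Function.update z i false) i)
        > ∑ _z ∈ univ.filter (fun z : Fin m → Bool => z i = true), (2 * b) := by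
      apply Finset.sum_lt_sum_of_nonempty hne
      intro z hzz
      simp only [mem_filter, mem_univ, true_and] at hzz
      exact hcon i z hzz
    rw [Finset.sum_const, nsmul_eq_mul] at hlt
    rw [split, reflect, ← Finset.sum_add_distrib]
    exact hlt
  have card2 : ∀ i : Fin m, 2 * ((univ.filter fun z : Fin m → Bool => z i = true).card : ℝ)
      = (2:ℝ) ^ m := by
    intro i
    have hcc : (univ.filter fun z : Fin m → Bool => z i = true).card
        = (univ.filter fun z : Fin m → Bool => ¬ z i = true).card := by
      apply Finset.card_nbij (fun z => Function.update z i false)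
      · intro z hzz
        simp only [mem_coe, mem_filter, mem_univ, true_and] at hzz ⊢
        simp
      · intro z1 h1 z2 h2 heq
        simp only [mem_coe, mem_filter, mem_univ, true_and] at h1 h2
        funext j
        rcases eq_or_ne j i with rfl | hji
        · rw [h1, h2]
        · have h3 := congrFun heq j
          dsimp only at h3
          rwa [Function.update_of_ne hji, Function.update_of_ne hji] at h3
      · intro z hzz
        simp only [Set.mem_image, mem_coe, mem_filter, mem_univ, true_and] at hzz ⊢
        refine ⟨Function.update z i true, by simp, ?_⟩
        funext j
        rcases eq_or_ne j i with rfl | hji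
        · simp only [Function.update_self]
          simp only [Bool.not_eq_true] at hzz
          rw [hzz]
        · simp [Function.update_of_ne hji]
    have hsum : (univ.filter fun z : Fin m → Bool => z i = true).card
        + (univ.filter fun z : Fin m → Bool => ¬ z i = true).card
        = 2 ^ m := by
      rw [Finset.card_filter_add_card_filter_not, Finset.card_univ, Fintype.card_fun,
        Fintype.card_fin, Fintype.card_bool]
    rw [← hcc] at hsum
    have : 2 * (univ.filter fun z : Fin m → Bool => z i = true).card = 2 ^ m := by rw [two_mul]; exact hsum
    calc 2 * ((univ.filter fun z : Fin m → Bool => z i = true).card : ℝ)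
        = ((2 * (univ.filter fun z : Fin m → Bool => z i = true).card : ℕ) : ℝ) := by
          push_cast; ring
      _ = (2:ℝ) ^ m := by rw [this]; push_cast; ring
  have total_lt : ((2:ℝ) ^ m) * m * b < ∑ i : Fin m, ∑ z : Fin m → Bool, f z i := by
    have : ∑ i : Fin m, ((univ.filter fun z : Fin m → Bool => z i = true).card * (2 * b))
        < ∑ i : Fin m, ∑ z : Fin m → Bool, f z i := by
      apply Finset.sum_lt_sum_of_nonempty
      · exact ⟨⟨0, hm⟩, mem_univ _⟩
      · intro i _
        exact key i
    refine lt_of_le_of_lt (le_of_eq ?_) this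
    rw [Finset.sum_congr rfl fun i (_ : i ∈ univ) => (by
      linear_combination b * card2 i : ((univ.filter fun z : Fin m → Bool => z i = true).card : ℝ) * (2 * b)
        = (2:ℝ) ^ m * b)]
    rw [Finset.sum_const, card_univ, Fintype.card_fin, nsmul_eq_mul]
    ring
  have total_le : ∑ i : Fin m, ∑ z : Fin m → Bool, f z i ≤ ((2:ℝ) ^ m) * m * b := by
    rw [Finset.sum_comm]
    calc ∑ z : Fin m → Bool, ∑ i, f z i ≤ ∑ _z : Fin m → Bool, (m : ℝ) * b :=
          Finset.sum_le_sum fun z _ => hz z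
      _ = ((2:ℝ) ^ m) * m * b := by
        rw [Finset.sum_const, card_univ, nsmul_eq_mul, Fintype.card_fun, Fintype.card_fin,
          Fintype.card_bool]
        push_cast; ring
  linarith


/-- Sample complexity lower bound for `(ε,δ)`-DP `k`-ary distribution estimation under total
variation distance: any `(ε,δ)`-DP estimator achieving expected TV error at most `α` on every
`p ∈ Δ_k` requires `n ≥ c (k/α² + k/(α(ε+δ)))` samples. -/
theorem kary_tv_approx_dp_lower_bound :
    ∃ c : ℝ, 0 < c ∧
      ∀ (k : ℕ), 2 ≤ k → Even k → ∀ α : ℝ, 0 < α → α < 1 / 10 →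
        ∀ ε : ℝ, 0 < ε → ∀ δ : ℝ, 0 ≤ δ → ∀ n : ℕ,
        ∀ est : Kernel (Fin n → Fin k) (simplex k), IsMarkovKernel est → IsDP est ε δ →
          (∀ p : simplex k,
            ∫⁻ x, ∫⁻ q, ENNReal.ofReal (tvVec q.1 p.1) ∂(est x) ∂(iidSamples n p.1)
              ≤ ENNReal.ofReal α) →
          c * (k / α ^ 2 + k / (α * (ε + δ))) ≤ n := by
  classical
  refine ⟨1/20000, by norm_num, ?_⟩
  intro k hk2 hkeven α hα0 hα10 ε hε δ hδ n est hMk hDP hacc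
  obtain ⟨m, rfl⟩ := hkeven
  have hm : 1 ≤ m := by omega
  have hK : (0:ℝ) < (m:ℝ) + m := by
    have : (1:ℝ) ≤ (m:ℝ) := by exact_mod_cast hm
    linarith
  set τ : ℝ := 10 * α with hτdef
  have hτ0 : 0 < τ := by positivity
  have hτ1 : τ ≤ 1 := by rw [hτdef]; linarith
  -- the master inequality for every z
  set f : (Fin m → Bool) → Fin m → ℝ :=
    fun z i => ∑ x : Fin n → Fin (m + m), wvec τ z x * (est x (wrongSet m z i)).toReal
    with hf
  have hmaster : ∀ z : Fin m → Bool, ∑ i, f z i ≤ (m : ℝ) * (1/5) := by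
    intro z
    have h := master est hm hτ0 hτ1 hα0.le z
      (hacc ⟨pv τ z, pv_mem hm hτ0.le hτ1⟩)
    have hτK : (0:ℝ) < τ / ((m:ℝ) + m) := by positivity
    rw [hf]
    have h2 : ∑ i, ∑ x, wvec τ z x * (est x (wrongSet m z i)).toReal ≤ α * ((m + m) / τ) := by
      rw [← le_div_iff₀' hτK] at h
      calc ∑ i, ∑ x, wvec τ z x * (est x (wrongSet m z i)).toReal
          ≤ α / (τ / ((m:ℝ) + m)) := h
        _ = α * ((m + m) / τ) := by field_simp
    refine le_trans h2 (le_of_eq ?_)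
    rw [hτdef]
    field_simp
    ring
  obtain ⟨i₀, z, hz, hpair⟩ := exists_good_pair hm f (1/5) hmaster
  set z' : Fin m → Bool := Function.update z i₀ false with hz'
  -- identify the two failure terms
  have hw1 : wrongSet m z i₀ = (Sdec m i₀)ᶜ := by unfold wrongSet; rw [hz]; simp
  have hw2 : wrongSet m z' i₀ = Sdec m i₀ := by
    unfold wrongSet; rw [hz', Function.update_self]; simp
  set t : (Fin n → Fin (m + m)) → ℝ := fun x => (est x (Sdec m i₀)).toReal with ht
  have ht0 : ∀ x, 0 ≤ t x := fun x => ENNReal.toReal_nonneg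
  have ht1 : ∀ x, t x ≤ 1 := by
    intro x
    have : est x (Sdec m i₀) ≤ 1 := prob_le_one
    calc t x ≤ (1 : ℝ≥0∞).toReal := ENNReal.toReal_mono (by simp) this
      _ = 1 := by simp
  have hcompl : ∀ x, (est x (Sdec m i₀)ᶜ).toReal = 1 - t x := by
    intro x
    rw [prob_compl_eq_one_sub (Sdec_meas m i₀)]
    rw [ENNReal.toReal_sub_of_le prob_le_one (by simp)]
    simp [ht]
  have hfail1 : f z i₀ = ∑ x, wvec τ z x * (1 - t x) := by
    rw [hf]
    refine Finset.sum_congr rfl fun x _ => ?_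
    rw [hw1, hcompl]
  have hfail2 : f z' i₀ = ∑ x, wvec τ z' x * t x := by
    rw [hf]
    refine Finset.sum_congr rfl fun x _ => ?_
    rw [hw2]
  -- nonnegativity of failure terms and the pair bound
  have hf1nn : 0 ≤ f z i₀ := by
    rw [hfail1]
    exact Finset.sum_nonneg fun x _ =>
      mul_nonneg (wvec_nonneg hm hτ0.le hτ1 z x) (by linarith [ht1 x])
  have hf2nn : 0 ≤ f z' i₀ := by
    rw [hfail2]
    exact Finset.sum_nonneg fun x _ =>
      mul_nonneg (wvec_nonneg hm hτ0.le hτ1 z' x) (ht0 x)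
  have hpair' : f z i₀ + f z' i₀ ≤ 2/5 := by
    refine le_trans hpair (by norm_num)
  -- Le Cam : total variation of the two product distributions is at least 3/5
  have hsum1 : ∑ x : Fin n → Fin (m + m), wvec τ z x = 1 := wvec_sum hm z
  have hsum2 : ∑ x : Fin n → Fin (m + m), wvec τ z' x = 1 := wvec_sum hm z'
  have hlecam := lecam_sum (fun x => wvec τ z x) (fun x => wvec τ z' x) t hsum1 hsum2 ht0 ht1
  have htv : 6/5 ≤ ∑ x : Fin n → Fin (m + m), |wvec τ z x - wvec τ z' x| := by
    rw [← hfail1, ← hfail2] at hlecam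
    linarith [hlecam, hpair']
  -- Bhattacharyya computation
  set ρ : ℝ := ∑ a, Real.sqrt (pv τ z a * pv τ z' a) with hρ
  have hBeq : ∑ x : Fin n → Fin (m + m), Real.sqrt (wvec τ z x * wvec τ z' x) = ρ ^ n := by
    have e1 : ∀ x : Fin n → Fin (m + m), Real.sqrt (wvec τ z x * wvec τ z' x)
        = ∏ j, Real.sqrt (pv τ z (x j) * pv τ z' (x j)) := by
      intro x
      rw [show wvec τ z x * wvec τ z' x = ∏ j, (pv τ z (x j) * pv τ z' (x j)) by
        rw [wvec, wvec, ← Finset.prod_mul_distrib]]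
      exact sqrt_finset_prod _ _ fun j _ =>
        mul_nonneg (pv_nonneg hm hτ0.le hτ1 _) (pv_nonneg hm hτ0.le hτ1 _)
    rw [Finset.sum_congr rfl fun x _ => e1 x,
      sum_prod_single (fun _ a => Real.sqrt (pv τ z a * pv τ z' a))]
    rw [Finset.prod_const, Finset.card_univ, Fintype.card_fin]
  have hρ1 : 1 - 2 * τ ^ 2 / ((m:ℝ) + m) ≤ ρ := bc_bound hm hτ0 hτ1 z i₀ hz
  have hρ0 : 0 ≤ ρ := Finset.sum_nonneg fun a _ => Real.sqrt_nonneg _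
  have harg0 : (0:ℝ) ≤ 1 - 2 * τ ^ 2 / ((m:ℝ) + m) := by
    have h2m : (2:ℝ) ≤ (m:ℝ) + m := by
      have : (1:ℝ) ≤ (m:ℝ) := by exact_mod_cast hm
      linarith
    have : 2 * τ ^ 2 / ((m:ℝ) + m) ≤ 2 * 1 / 2 := by
      apply div_le_div₀ (by norm_num) (by nlinarith) (by norm_num) h2m
    linarith
  have hBge : 1 - (n:ℝ) * (2 * τ ^ 2 / ((m:ℝ) + m)) ≤ ρ ^ n := by
    have hb := one_add_mul_le_pow (a := -(2 * τ ^ 2 / ((m:ℝ) + m))) (by linarith) n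
    have hmono : (1 - 2 * τ ^ 2 / ((m:ℝ) + m)) ^ n ≤ ρ ^ n := pow_le_pow_left₀ harg0 hρ1 n
    calc 1 - (n:ℝ) * (2 * τ ^ 2 / ((m:ℝ) + m))
        = 1 + (n:ℝ) * (-(2 * τ ^ 2 / ((m:ℝ) + m))) := by ring
      _ ≤ (1 + -(2 * τ ^ 2 / ((m:ℝ) + m))) ^ n := hb
      _ = (1 - 2 * τ ^ 2 / ((m:ℝ) + m)) ^ n := by ring_nf
      _ ≤ ρ ^ n := hmono
  -- statistical bound : n ≥ (9/10000) K/α²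
  have hA : (9/10000) * (((m:ℝ) + m) / α ^ 2) ≤ n := by
    have hbc := tv_le_of_bc (fun x => wvec τ z x) (fun x => wvec τ z' x)
      (fun x => wvec_nonneg hm hτ0.le hτ1 z x) (fun x => wvec_nonneg hm hτ0.le hτ1 z' x)
      hsum1 hsum2
    rw [hBeq] at hbc
    have hsq35 : 3/5 ≤ Real.sqrt (1 - (ρ ^ n) ^ 2) := by linarith [htv, hbc]
    have hw0 : 0 < 1 - (ρ ^ n) ^ 2 := by
      have h1 : (0:ℝ) < Real.sqrt (1 - (ρ ^ n) ^ 2) := by linarith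
      exact Real.sqrt_pos.1 h1
    have h925 : (9/25 : ℝ) ≤ 1 - (ρ ^ n) ^ 2 := by
      have := (Real.le_sqrt (by norm_num : (0:ℝ) ≤ 3/5) hw0.le).1 hsq35
      calc (9/25 : ℝ) = (3/5:ℝ)^2 := by norm_num
        _ ≤ 1 - (ρ ^ n) ^ 2 := this
    set tt : ℝ := (n:ℝ) * (2 * τ ^ 2 / ((m:ℝ) + m)) with htt
    have htt0 : 0 ≤ tt := by positivity
    have hBB : 1 - (ρ ^ n) ^ 2 ≤ 2 * tt := by
      by_cases hcase : tt ≤ 1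
      · have h1 : 1 - tt ≤ ρ ^ n := hBge
        nlinarith
      · push_neg at hcase
        have h2 : (0:ℝ) ≤ (ρ ^ n) ^ 2 := sq_nonneg _
        nlinarith
    -- 9/25 ≤ 2 tt = 4 n τ²/K
    have hfin : (9/25 : ℝ) ≤ 4 * (n:ℝ) * τ ^ 2 / ((m:ℝ) + m) := by
      rw [htt] at hBB
      calc (9/25:ℝ) ≤ 2 * ((n:ℝ) * (2 * τ ^ 2 / ((m:ℝ) + m))) := le_trans h925 hBB
        _ = 4 * (n:ℝ) * τ ^ 2 / ((m:ℝ) + m) := by ring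
    rw [hτdef] at hfin
    rw [le_div_iff₀ hK] at hfin
    rw [← mul_div_assoc, div_le_iff₀ (show (0:ℝ) < α ^ 2 by positivity)]
    nlinarith [hfin]
  -- now case split on ε + δ
  have hεδ : 0 < ε + δ := by linarith
  have hgoalK : ((m + m : ℕ) : ℝ) = (m:ℝ) + m := by push_cast; ring
  have hn0 : (0:ℝ) < n := by
    have : (0:ℝ) < (9/10000) * (((m:ℝ) + m) / α ^ 2) := by positivity
    linarith
  by_cases hbig : 1/20 ≤ ε + δ
  · -- privacy term dominated by statistical term
    rw [hgoalK]
    have h1 : ((m:ℝ) + m) / (α * (ε + δ)) ≤ 20 * (((m:ℝ) + m) / α) := by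
      rw [div_le_iff₀ (by positivity)]
      have : 20 * (((m:ℝ) + m) / α) * (α * (ε + δ)) = 20 * ((m:ℝ) + m) * (ε + δ) := by
        field_simp
      rw [this]
      nlinarith
    have h2 : ((m:ℝ) + m) / α = α * (((m:ℝ) + m) / α ^ 2) := by
      field_simp
    have h3 : ((m:ℝ) + m) / (α * (ε + δ)) ≤ 2 * (((m:ℝ) + m) / α ^ 2) := by
      rw [h2] at h1
      have : 20 * (α * (((m:ℝ)+m) / α ^ 2)) ≤ 2 * (((m:ℝ)+m) / α ^ 2) := by
        have hq : (0:ℝ) ≤ ((m:ℝ)+m) / α ^ 2 := by positivity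
        nlinarith
      linarith
    have hq : (0:ℝ) ≤ ((m:ℝ)+m) / α ^ 2 := by positivity
    linarith [hA, h3, hq]
  · push_neg at hbig
    -- privacy bound
    set p : Fin (m + m) → ℝ := pv τ z with hp
    set q : Fin (m + m) → ℝ := pv τ z' with hq
    set T : ℝ := ∑ c, max (p c - q c) 0 with hT
    have hTeq : T = 2 * τ / ((m:ℝ) + m) := T_eq hm hτ0 z i₀ hz
    have hTpos : 0 < T := by rw [hTeq]; positivity
    set d₀ : ℕ := max 1 (Nat.ceil ((10:ℝ) * n * T)) with hd₀
    have hd₀pos : 0 < d₀ := lt_of_lt_of_le Nat.one_pos (le_max_left _ _)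
    have hd₀ge : (10:ℝ) * n * T ≤ d₀ := by
      calc (10:ℝ) * n * T ≤ (Nat.ceil ((10:ℝ) * n * T) : ℝ) := Nat.le_ceil _
        _ ≤ (d₀:ℝ) := by
            have hle : (Nat.ceil ((10:ℝ) * n * T)) ≤ d₀ := le_max_right _ _
            exact_mod_cast hle
    have htail : (n:ℝ) * T / d₀ ≤ 1/10 := by
      rw [div_le_iff₀ (by exact_mod_cast hd₀pos : (0:ℝ) < (d₀:ℝ))]
      linarith
    have htrans := dp_transfer (p := p) (q := q)
      (fun a => pv_nonneg hm hτ0.le hτ1 a) (fun a => pv_nonneg hm hτ0.le hτ1 a)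
      (pv_sum hm) (pv_sum hm) hTpos est hε.le hδ hDP (Sdec_meas m i₀) hd₀pos
    -- rewrite in terms of the fail quantities
    have hPplus : ∑ x, (∏ j, p (x j)) * (est x (Sdec m i₀)).toReal = 1 - f z i₀ := by
      have e : ∀ x : Fin n → Fin (m + m), (∏ j, p (x j)) * (est x (Sdec m i₀)).toReal
          = wvec τ z x - wvec τ z x * (1 - t x) := by
        intro x
        rw [show (∏ j, p (x j)) = wvec τ z x from rfl,
          show ((est x) (Sdec m i₀)).toReal = t x from rfl]
        ring
      rw [Finset.sum_congr rfl fun x _ => e x, Finset.sum_sub_distrib, hsum1, ← hfail1]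
    have hPminus : ∑ y, (∏ j, q (y j)) * (est y (Sdec m i₀)).toReal = f z' i₀ := by
      rw [hfail2]
      refine Finset.sum_congr rfl fun x _ => ?_
      rw [show wvec τ z' x = ∏ j, q (x j) from rfl]
    rw [hPplus, hPminus] at htrans
    have hPp : (1:ℝ) - f z i₀ ≥ 3/5 := by linarith [hpair', hf2nn]
    have hPm : f z' i₀ ≤ 2/5 := by linarith [hpair', hf1nn]
    have hstep : Real.exp (-(d₀ * ε)) * (1/2) - d₀ * δ ≤ 2/5 := by
      have h1 : (1:ℝ)/2 ≤ (1 - f z i₀) - (n:ℝ) * T / d₀ := by linarith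
      have h2 := mul_le_mul_of_nonneg_left h1 (Real.exp_pos (-(d₀ * ε))).le
      linarith [htrans, h2]
    have hd₀εδ : 1/20 ≤ (d₀:ℝ) * (ε + δ) := by
      by_cases hdd : 1/20 ≤ (d₀:ℝ) * δ
      · have : (0:ℝ) ≤ (d₀:ℝ) * ε := by positivity
        nlinarith
      · push_neg at hdd
        have hexple : Real.exp (-(d₀ * ε)) ≤ 9/10 := by nlinarith
        have hlin : 1 - (d₀:ℝ) * ε ≤ Real.exp (-(d₀ * ε)) := by
          have := Real.add_one_le_exp (-(d₀ * ε))
          linarith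
        have hde : 1/10 ≤ (d₀:ℝ) * ε := by linarith
        have : (0:ℝ) ≤ (d₀:ℝ) * δ := by positivity
        nlinarith
    -- d₀ cannot be 1, hence d₀ ≤ 20 n T
    have hd₀le : (d₀:ℝ) ≤ 20 * n * T := by
      have hd₀ne1 : d₀ ≠ 1 := by
        intro h1
        rw [h1] at hd₀εδ
        simp at hd₀εδ
        linarith
      have hceil2 : 2 ≤ Nat.ceil ((10:ℝ) * n * T) := by
        rcases Nat.lt_or_ge (Nat.ceil ((10:ℝ) * n * T)) 2 with hlt | hge
        · exfalso
          apply hd₀ne1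
          rw [hd₀]
          omega
        · exact hge
      have hgt1 : (1:ℝ) < (10:ℝ) * n * T := by
        by_contra hle
        push_neg at hle
        have : Nat.ceil ((10:ℝ) * n * T) ≤ 1 := by
          apply Nat.ceil_le.2
          simpa using hle
        omega
      have hd₀eq : d₀ = Nat.ceil ((10:ℝ) * n * T) := by
        rw [hd₀]
        exact max_eq_right (by omega)
      have hceil_le : (Nat.ceil ((10:ℝ) * n * T) : ℝ) < (10:ℝ) * n * T + 1 :=
        Nat.ceil_lt_add_one (by positivity)
      rw [hd₀eq]
      linarith
    have hB : ((m:ℝ) + m) / (α * (ε + δ)) ≤ 8000 * n := by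
      have h1 : 1/20 ≤ 20 * n * T * (ε + δ) := by
        calc (1:ℝ)/20 ≤ (d₀:ℝ) * (ε + δ) := hd₀εδ
          _ ≤ 20 * n * T * (ε + δ) := mul_le_mul_of_nonneg_right hd₀le hεδ.le
      rw [hTeq, hτdef] at h1
      rw [div_le_iff₀ (by positivity)]
      have hexpand : 20 * (n:ℝ) * (2 * (10 * α) / ((m:ℝ) + m)) * (ε + δ)
          = 400 * (n:ℝ) * α * (ε + δ) / ((m:ℝ) + m) := by ring
      rw [hexpand] at h1
      rw [le_div_iff₀ hK] at h1
      nlinarith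
    rw [hgoalK]
    have hA' : ((m:ℝ) + m) / α ^ 2 ≤ (10000/9) * n := by linarith [hA]
    linarith [hA', hB]
end groupdp
end
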